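/- arXiv:1006.1795 — 4 statements merged into one kernel-verified Lean document; each statement's English description precedes it below -/
import Mathlib

section
/- If gₙ : Ω → ℝ are measurable functions with gₙ → g almost everywhere, sup_{n≥1}|gₙ| is integrable, and T is an ergodic measure preserving transformation on the probability space (Ω, 𝒜, μ), then (1/n) Σ_{k=1}^n gₙ₋ₖ₊₁ ∘ Tᵏ → ∫_Ω g dμ almost everywhere. -/
open MeasureTheory Filter Finset

section Helpers

variable {Ω : Type*} [MeasurableSpace Ω] {μ : Measure Ω} {T : Ω → Ω} {f : Ω → ℝ}

lemma integral_comp_mp (hT : MeasurePreserving T μ μ) (hf : AEStronglyMeasurable f μ) :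
    ∫ ω, f (T ω) ∂μ = ∫ ω, f ω ∂μ := by
  have h1 : ∫ y, f y ∂(Measure.map T μ) = ∫ x, f (T x) ∂μ :=
    integral_map hT.aemeasurable (by rw [hT.map_eq]; exact hf)
  rw [← h1, hT.map_eq]

lemma integrable_comp_mp (hT : MeasurePreserving T μ μ) (hfi : Integrable f μ) :
    Integrable (fun ω => f (T ω)) μ :=
  (hT.integrable_comp hfi.aestronglyMeasurable).2 hfi

lemma measurable_birkhoffSum (hTm : Measurable T) (hf : Measurable f) (n : ℕ) :
    Measurable (birkhoffSum T f n) :=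
  Finset.measurable_sum _ (fun k _ => hf.comp (hTm.iterate k))

lemma integrable_birkhoffSum (hT : MeasurePreserving T μ μ) (hfi : Integrable f μ) (n : ℕ) :
    Integrable (birkhoffSum T f n) μ := by
  have : ∀ k : ℕ, Integrable (fun ω => f (T^[k] ω)) μ :=
    fun k => (hT.iterate k).integrable_comp hfi.aestronglyMeasurable |>.2 hfi
  exact integrable_finset_sum _ (fun k _ => this k)

end Helpers

section MaxS

variable {Ω : Type*} (T : Ω → Ω) (f : Ω → ℝ)

/-- `maxS T f n ω = max (0, S₁ ω, ..., Sₙ ω)` where `Sₖ` is the Birkhoff sum. -/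
noncomputable def maxS : ℕ → Ω → ℝ
  | 0 => fun _ => 0
  | (n+1) => fun ω => max (birkhoffSum T f (n+1) ω) (maxS n ω)

variable {T f}

lemma maxS_succ (n : ℕ) (ω : Ω) :
    maxS T f (n+1) ω = max (birkhoffSum T f (n+1) ω) (maxS T f n ω) := rfl

lemma maxS_mono_succ (n : ℕ) (ω : Ω) : maxS T f n ω ≤ maxS T f (n+1) ω := le_max_right _ _

lemma maxS_nonneg (n : ℕ) (ω : Ω) : 0 ≤ maxS T f n ω := by
  induction n with
  | zero => exact le_refl 0
  | succ n ih => exact ih.trans (maxS_mono_succ n ω)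

lemma birkhoffSum_le_maxS {k n : ℕ} (hk : k ≤ n) (ω : Ω) :
    birkhoffSum T f k ω ≤ maxS T f n ω := by
  induction n with
  | zero => simp_all [maxS, Nat.le_zero.mp hk, birkhoffSum_zero]
  | succ n ih =>
    rcases Nat.lt_succ_iff_lt_or_eq.mp (Nat.lt_succ_of_le hk) with h | h
    · exact (ih (Nat.lt_succ_iff.mp h)).trans (maxS_mono_succ n ω)
    · rw [h, maxS_succ]; exact le_max_left _ _

end MaxS

section MaxS2
variable {Ω : Type*} [MeasurableSpace Ω] {T : Ω → Ω} {f : Ω → ℝ}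

lemma exists_maxS_eq (n : ℕ) (ω : Ω) : ∃ j ≤ n, maxS T f n ω = birkhoffSum T f j ω := by
  induction n with
  | zero => exact ⟨0, le_refl 0, (birkhoffSum_zero T f ω).symm⟩
  | succ n ih =>
    obtain ⟨j, hj, hje⟩ := ih
    rw [maxS_succ]
    rcases max_cases (birkhoffSum T f (n+1) ω) (maxS T f n ω) with ⟨h1, _⟩ | ⟨h1, _⟩
    · exact ⟨n+1, le_refl _, h1⟩
    · exact ⟨j, hj.trans (Nat.le_succ n), h1.trans hje⟩

/-- Key recursion: `maxS (n+1) ω = max 0 (f ω + maxS n (T ω))`. -/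
lemma maxS_succ_rec (n : ℕ) (ω : Ω) :
    maxS T f (n+1) ω = max 0 (f ω + maxS T f n (T ω)) := by
  induction n generalizing ω with
  | zero => simp [maxS, birkhoffSum_one]; rw [max_comm]
  | succ n ih =>
    rw [maxS_succ, ih ω, birkhoffSum_succ' T f (n+1) ω, maxS_succ]
    rcases le_total (maxS T f n (T ω)) (birkhoffSum T f (n+1) (T ω)) with h | h <;>
    · simp only [max_def]
      split_ifs <;> linarith

lemma measurable_maxS (hTm : Measurable T) (hf : Measurable f) (n : ℕ) :
    Measurable (maxS T f n) := by
  induction n with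
  | zero => exact measurable_const
  | succ n ih => exact (measurable_birkhoffSum hTm hf (n+1)).max ih

lemma integrable_maxS {μ : Measure Ω} (hT : MeasurePreserving T μ μ) (hf : Measurable f)
    (hfi : Integrable f μ) (n : ℕ) : Integrable (maxS T f n) μ := by
  have hb : ∀ ω, ‖maxS T f n ω‖ ≤ ‖∑ k ∈ Finset.range (n+1), |birkhoffSum T f k ω|‖ := by
    intro ω
    obtain ⟨j, hj, hje⟩ := exists_maxS_eq (T := T) (f := f) n ω
    rw [Real.norm_eq_abs, abs_of_nonneg (maxS_nonneg n ω), hje]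
    calc birkhoffSum T f j ω ≤ |birkhoffSum T f j ω| := le_abs_self _
      _ ≤ ∑ k ∈ Finset.range (n+1), |birkhoffSum T f k ω| := by
          exact Finset.single_le_sum (f := fun k => |birkhoffSum T f k ω|)
            (fun k _ => abs_nonneg _) (Finset.mem_range.mpr (Nat.lt_succ_of_le hj))
      _ ≤ ‖∑ k ∈ Finset.range (n+1), |birkhoffSum T f k ω|‖ := le_abs_self _
  exact Integrable.mono
    (integrable_finset_sum _ (fun k (_ : k ∈ Finset.range (n+1)) => (integrable_birkhoffSum hT hfi k).abs))
    ((measurable_maxS hT.measurable hf n).aestronglyMeasurable) (Eventually.of_forall hb)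
end MaxS2
section Maximal
variable {Ω : Type*} [MeasurableSpace Ω] {μ : Measure Ω} {T : Ω → Ω} {f : Ω → ℝ}

/-- The maximal ergodic theorem. -/
lemma maximal_ergodic (hT : MeasurePreserving T μ μ) (hf : Measurable f)
    (hfi : Integrable f μ) :
    0 ≤ ∫ ω, Set.indicator {ω | ∃ n, 1 ≤ n ∧ 0 < birkhoffSum T f n ω} f ω ∂μ := by
  set A : ℕ → Set Ω := fun n => {ω | 0 < f ω + maxS T f n (T ω)} with hA
  have hAmeas : ∀ n, MeasurableSet (A n) :=
    fun n => measurableSet_lt measurable_const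
      (hf.add ((measurable_maxS hT.measurable hf n).comp hT.measurable))
  have hAmono : ∀ n m, n ≤ m → A n ⊆ A m := by
    intro n m hnm ω h
    simp only [hA, Set.mem_setOf_eq] at h ⊢
    have : maxS T f n (T ω) ≤ maxS T f m (T ω) := by
      clear h
      induction m with
      | zero => simp [Nat.le_zero.mp hnm]
      | succ m ih =>
        rcases Nat.lt_succ_iff_lt_or_eq.mp (Nat.lt_succ_of_le hnm) with h | h
        · exact (ih (Nat.lt_succ_iff.mp h)).trans (maxS_mono_succ m (T ω))
        · rw [h]
    linarith
  -- key pointwise inequality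
  have hkey : ∀ n ω, maxS T f (n+1) ω - maxS T f n (T ω) ≤ Set.indicator (A n) f ω := by
    intro n ω
    rw [maxS_succ_rec]
    by_cases h : ω ∈ A n
    · rw [Set.indicator_of_mem h]
      have : (0 : ℝ) ≤ f ω + maxS T f n (T ω) := le_of_lt h
      rw [max_eq_right this]; linarith
    · rw [Set.indicator_of_notMem h]
      have h' : f ω + maxS T f n (T ω) ≤ 0 := le_of_not_gt h
      rw [max_eq_left h']
      linarith [maxS_nonneg (T := T) (f := f) n (T ω)]
  -- each integral is nonneg
  have hint : ∀ n, 0 ≤ ∫ ω, Set.indicator (A n) f ω ∂μ := by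
    intro n
    have h1 : Integrable (fun ω => maxS T f (n+1) ω - maxS T f n (T ω)) μ :=
      (integrable_maxS hT hf hfi (n+1)).sub (integrable_comp_mp hT (integrable_maxS hT hf hfi n))
    have h2 : Integrable (fun ω => Set.indicator (A n) f ω) μ := hfi.indicator (hAmeas n)
    have h3 := integral_mono h1 h2 (hkey n)
    rw [integral_sub (integrable_maxS hT hf hfi (n+1)) (integrable_comp_mp hT (integrable_maxS hT hf hfi n))] at h3
    rw [integral_comp_mp hT (measurable_maxS hT.measurable hf n).aestronglyMeasurable] at h3
    have h4 : ∫ ω, maxS T f n ω ∂μ ≤ ∫ ω, maxS T f (n+1) ω ∂μ :=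
      integral_mono (integrable_maxS hT hf hfi n) (integrable_maxS hT hf hfi (n+1))
        (fun ω => maxS_mono_succ n ω)
    linarith
  -- the union
  have hunion : {ω | ∃ n, 1 ≤ n ∧ 0 < birkhoffSum T f n ω} = ⋃ n, A n := by
    ext ω
    simp only [Set.mem_setOf_eq, Set.mem_iUnion]
    constructor
    · rintro ⟨n, hn1, hpos⟩
      obtain ⟨m, rfl⟩ := Nat.exists_eq_add_of_le hn1
      refine ⟨m, ?_⟩
      have : birkhoffSum T f m (T ω) ≤ maxS T f m (T ω) := birkhoffSum_le_maxS (le_refl m) (T ω)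
      have he : birkhoffSum T f (1 + m) ω = f ω + birkhoffSum T f m (T ω) := by
        rw [Nat.add_comm]; exact birkhoffSum_succ' T f m ω
      simp only [hA, Set.mem_setOf_eq]
      rw [he] at hpos; linarith
    · rintro ⟨n, hn⟩
      obtain ⟨j, hj, hje⟩ := exists_maxS_eq (T := T) (f := f) n (T ω)
      refine ⟨j + 1, Nat.le_add_left 1 j, ?_⟩
      rw [birkhoffSum_succ']
      simp only [hA, Set.mem_setOf_eq] at hn
      rw [hje] at hn; linarith
  rw [hunion]
  -- dominated convergence
  have hconv : Tendsto (fun n => ∫ ω, Set.indicator (A n) f ω ∂μ) atTop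
      (nhds (∫ ω, Set.indicator (⋃ n, A n) f ω ∂μ)) := by
    refine tendsto_integral_of_dominated_convergence (fun ω => |f ω|)
      (fun n => (hfi.indicator (hAmeas n)).aestronglyMeasurable) hfi.abs
      (fun n => Eventually.of_forall (fun ω => ?_)) (Eventually.of_forall (fun ω => ?_))
    · rw [Real.norm_eq_abs]
      by_cases h : ω ∈ A n
      · rw [Set.indicator_of_mem h]
      · rw [Set.indicator_of_notMem h]; simp [abs_nonneg]
    · by_cases h : ω ∈ ⋃ n, A n
      · rw [Set.indicator_of_mem h]
        obtain ⟨n, hn⟩ := Set.mem_iUnion.mp h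
        refine tendsto_const_nhds.congr' ?_
        filter_upwards [eventually_ge_atTop n] with m hm
        exact (Set.indicator_of_mem (hAmono n m hm hn) f).symm
      · rw [Set.indicator_of_notMem h]
        have : ∀ n, Set.indicator (A n) f ω = 0 := by
          intro n
          exact Set.indicator_of_notMem (fun hn => h (Set.mem_iUnion.mpr ⟨n, hn⟩)) f
        simp only [this]
        exact tendsto_const_nhds
  exact ge_of_tendsto' hconv hint

end Maximal
section Birkhoff
variable {Ω : Type*} [MeasurableSpace Ω] {μ : Measure Ω} {T : Ω → Ω} {f : Ω → ℝ}

lemma eventually_linear {r q : ℝ} (h : r < q) (a : ℝ) :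
    ∀ᶠ n : ℕ in atTop, r * n + a ≤ q * n := by
  have h1 : Tendsto (fun n : ℕ => (q - r) * n) atTop atTop :=
    Tendsto.const_mul_atTop (by linarith) tendsto_natCast_atTop_atTop
  filter_upwards [h1.eventually_ge_atTop a] with n hn
  nlinarith [hn]

lemma birkhoffSum_sub_const (T : Ω → Ω) (f : Ω → ℝ) (c : ℝ) (n : ℕ) (ω : Ω) :
    birkhoffSum T (fun ω => f ω - c) n ω = birkhoffSum T f n ω - n * c := by
  simp only [birkhoffSum, Finset.sum_sub_distrib, Finset.sum_const, Finset.card_range,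
    nsmul_eq_mul]

lemma birkhoffSum_neg' (T : Ω → Ω) (f : Ω → ℝ) (n : ℕ) (ω : Ω) :
    birkhoffSum T (fun ω => -f ω) n ω = -birkhoffSum T f n ω := by
  simp only [birkhoffSum, ← Finset.sum_neg_distrib]

lemma birkhoff_upper [IsProbabilityMeasure μ] (hT : Ergodic T μ) (hf : Measurable f)
    (hfi : Integrable f μ) {c : ℝ} (hc : ∫ ω, f ω ∂μ < c) :
    ∀ᵐ ω ∂μ, ∀ᶠ n : ℕ in atTop, birkhoffSum T f n ω ≤ c * n := by
  set I := ∫ ω, f ω ∂μ with hI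
  set c' : ℝ := (I + c)/2 with hc'
  have hc'1 : I < c' := by rw [hc']; linarith
  have hc'2 : c' < c := by rw [hc']; linarith
  set E : Set Ω := {ω | ∃ q : ℚ, c' < (q:ℝ) ∧ ∃ᶠ n : ℕ in atTop,
    (q:ℝ) * n < birkhoffSum T f n ω} with hE
  have hEmeas : MeasurableSet E := by
    have hrw : E = ⋃ (q : ℚ), ⋃ (_ : c' < (q:ℝ)), ⋂ (N : ℕ), ⋃ (n : ℕ), ⋃ (_ : N ≤ n),
        {ω | (q:ℝ) * n < birkhoffSum T f n ω} := by
      ext ω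
      simp only [hE, Set.mem_setOf_eq, Set.mem_iUnion, Set.mem_iInter, frequently_atTop,
        exists_prop]
    rw [hrw]
    exact MeasurableSet.iUnion fun q => MeasurableSet.iUnion fun _ =>
      MeasurableSet.iInter fun N => MeasurableSet.iUnion fun n => MeasurableSet.iUnion fun _ =>
        measurableSet_lt measurable_const (measurable_birkhoffSum hT.measurable hf n)
  have hS : ∀ (n : ℕ) (ω : Ω), birkhoffSum T f n (T ω) = birkhoffSum T f (n+1) ω - f ω := by
    intro n ω; rw [birkhoffSum_succ']; ring
  have hinv : T ⁻¹' E = E := by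
    ext ω
    simp only [hE, Set.mem_preimage, Set.mem_setOf_eq]
    constructor
    · rintro ⟨q, hq, hfreq⟩
      obtain ⟨r, hr1, hr2⟩ := exists_rat_btwn hq
      refine ⟨r, hr1, frequently_atTop.mpr fun N => ?_⟩
      obtain ⟨N₀, hN₀⟩ := eventually_atTop.mp
        (eventually_linear (show (r:ℝ) < q by exact_mod_cast hr2) ((r:ℝ) - f ω))
      obtain ⟨n, hn1, hn2⟩ := frequently_atTop.mp hfreq (max N N₀)
      refine ⟨n + 1, le_trans (le_max_left N N₀) (Nat.le_succ_of_le hn1), ?_⟩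
      rw [hS n ω] at hn2
      have hlin := hN₀ n (le_trans (le_max_right N N₀) hn1)
      push_cast
      nlinarith [hn2, hlin]
    · rintro ⟨q, hq, hfreq⟩
      obtain ⟨r, hr1, hr2⟩ := exists_rat_btwn hq
      refine ⟨r, hr1, frequently_atTop.mpr fun N => ?_⟩
      obtain ⟨N₀, hN₀⟩ := eventually_atTop.mp
        (eventually_linear (show (r:ℝ) < q by exact_mod_cast hr2) (f ω - (r:ℝ)))
      obtain ⟨m, hm1, hm2⟩ := frequently_atTop.mp hfreq (max (N+1) (N₀+1))
      obtain ⟨n, rfl⟩ : ∃ n, m = n + 1 :=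
        ⟨m - 1, by omega⟩
      have hnN : N ≤ n := by
        have := le_trans (le_max_left (N+1) (N₀+1)) hm1; omega
      refine ⟨n, hnN, ?_⟩
      rw [hS n ω]
      have hmN : N₀ + 1 ≤ n + 1 := le_trans (le_max_right (N+1) (N₀+1)) hm1
      have hlin := hN₀ (n+1) (by omega)
      push_cast at hm2 hlin ⊢
      nlinarith [hm2, hlin]
  rcases hT.toPreErgodic.ae_empty_or_univ hEmeas hinv with h0 | h1
  · -- μ E = 0 : conclude
    have hE0 : ∀ᵐ ω ∂μ, ω ∉ E := by
      rw [ae_iff]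
      simpa using (measure_congr h0).trans (by simp)
    obtain ⟨r, hr1, hr2⟩ := exists_rat_btwn hc'2
    filter_upwards [hE0] with ω hω
    have hnot : ¬ (∃ᶠ n : ℕ in atTop, (r:ℝ) * n < birkhoffSum T f n ω) := by
      intro hfr
      exact hω ⟨r, hr1, hfr⟩
    rw [not_frequently] at hnot
    filter_upwards [hnot] with n hn
    rw [not_lt] at hn
    calc birkhoffSum T f n ω ≤ (r:ℝ) * n := hn
      _ ≤ c * n := mul_le_mul_of_nonneg_right hr2.le (Nat.cast_nonneg n)
  · -- μ E = 1 : contradiction with maximal ergodic theorem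
    exfalso
    set f' : Ω → ℝ := fun ω => f ω - c' with hf'
    have hf'm : Measurable f' := hf.sub measurable_const
    have hf'i : Integrable f' μ := hfi.sub (integrable_const c')
    set B : Set Ω := {ω | ∃ n, 1 ≤ n ∧ 0 < birkhoffSum T f' n ω} with hB
    have hBmeas : MeasurableSet B := by
      have hrw : B = ⋃ (n : ℕ), ⋃ (_ : 1 ≤ n), {ω | 0 < birkhoffSum T f' n ω} := by
        ext ω; simp [hB]
      rw [hrw]
      exact MeasurableSet.iUnion fun n => MeasurableSet.iUnion fun _ =>
        measurableSet_lt measurable_const (measurable_birkhoffSum hT.measurable hf'm n)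
    have hsub : E ⊆ B := by
      rintro ω ⟨q, hq, hfreq⟩
      obtain ⟨n, hn1, hn2⟩ := frequently_atTop.mp hfreq 1
      refine ⟨n, hn1, ?_⟩
      rw [hf', birkhoffSum_sub_const]
      have h1 : (1:ℝ) ≤ n := by exact_mod_cast hn1
      nlinarith [hn2, hq, h1]
    have hmuE : μ E = 1 := by
      have := measure_congr h1
      simpa using this
    have hmuB : μ B = 1 :=
      le_antisymm prob_le_one (hmuE ▸ measure_mono hsub)
    have hBae : ∀ᵐ ω ∂μ, ω ∈ B := by
      rw [ae_iff]
      have : μ Bᶜ = 0 := by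
        rw [measure_compl hBmeas (measure_ne_top μ B), hmuB]; simp
      exact this
    have hind : (fun ω => Set.indicator B f' ω) =ᵐ[μ] f' := by
      filter_upwards [hBae] with ω hω
      exact Set.indicator_of_mem hω f'
    have hmax := maximal_ergodic hT.toMeasurePreserving hf'm hf'i
    rw [← hB] at hmax
    rw [integral_congr_ae hind] at hmax
    have : ∫ ω, f' ω ∂μ = I - c' := by
      rw [hf', integral_sub hfi (integrable_const c'), integral_const]
      simp [hI]
    rw [this] at hmax
    linarith

theorem birkhoff_ergodic [IsProbabilityMeasure μ] (hT : Ergodic T μ) (hf : Measurable f)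
    (hfi : Integrable f μ) :
    ∀ᵐ ω ∂μ, Tendsto (fun n => birkhoffSum T f n ω / n) atTop (nhds (∫ ω, f ω ∂μ)) := by
  set I := ∫ ω, f ω ∂μ with hI
  have hup : ∀ k : ℕ, ∀ᵐ ω ∂μ, ∀ᶠ n : ℕ in atTop,
      birkhoffSum T f n ω ≤ (I + 1/(k+1)) * n := by
    intro k
    have hpos : (0:ℝ) < 1/((k:ℝ)+1) := by positivity
    exact birkhoff_upper hT hf hfi (by linarith)
  have hlo : ∀ k : ℕ, ∀ᵐ ω ∂μ, ∀ᶠ n : ℕ in atTop,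
      (I - 1/(k+1)) * n ≤ birkhoffSum T f n ω := by
    intro k
    have hneg : ∫ ω, -f ω ∂μ < -(I - 1/(k+1)) := by
      rw [integral_neg]
      have : (0:ℝ) < 1/(k+1) := by positivity
      linarith
    filter_upwards [birkhoff_upper hT hf.neg hfi.neg hneg] with ω hω
    filter_upwards [hω] with n hn
    change birkhoffSum T (fun ω => -f ω) n ω ≤ _ at hn
    rw [birkhoffSum_neg'] at hn
    linarith [hn]
  filter_upwards [ae_all_iff.mpr hup, ae_all_iff.mpr hlo] with ω hu hl
  rw [tendsto_order]
  constructor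
  · intro a ha
    obtain ⟨k, hk⟩ := exists_nat_one_div_lt (show (0:ℝ) < I - a by linarith)
    filter_upwards [hl k, eventually_ge_atTop 1] with n hn hn1
    have hnpos : (0:ℝ) < n := by exact_mod_cast hn1
    have : I - 1/(k+1) ≤ birkhoffSum T f n ω / n := (le_div_iff₀ hnpos).mpr hn
    have hk' : (1:ℝ)/(k+1) < I - a := by exact_mod_cast hk
    linarith
  · intro a ha
    obtain ⟨k, hk⟩ := exists_nat_one_div_lt (show (0:ℝ) < a - I by linarith)
    filter_upwards [hu k, eventually_ge_atTop 1] with n hn hn1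
    have hnpos : (0:ℝ) < n := by exact_mod_cast hn1
    have : birkhoffSum T f n ω / n ≤ I + 1/(k+1) := (div_le_iff₀ hnpos).mpr hn
    have hk' : (1:ℝ)/(k+1) < a - I := by exact_mod_cast hk
    linarith

end Birkhoff
section Shift
variable {Ω : Type*}

lemma tendsto_one_div_nat : Tendsto (fun n : ℕ => 1 / (n:ℝ)) atTop (nhds 0) :=
  tendsto_one_div_atTop_nhds_zero_nat

lemma tendsto_shift_div {a : ℕ → ℝ} {L : ℝ}
    (ha : Tendsto (fun n => a n / n) atTop (nhds L)) (c : ℝ) :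
    Tendsto (fun n : ℕ => (a (n+1) - c) / n) atTop (nhds L) := by
  have h1 : Tendsto (fun n : ℕ => a (n+1) / ((n:ℝ)+1)) atTop (nhds L) := by
    have h := ha.comp (tendsto_add_atTop_nat 1)
    refine h.congr fun n => ?_
    simp only [Function.comp_apply]
    push_cast
    ring_nf
  have h2 : Tendsto (fun n : ℕ => ((n:ℝ)+1) / n) atTop (nhds 1) := by
    have : Tendsto (fun n : ℕ => 1 + 1/(n:ℝ)) atTop (nhds (1 + 0)) :=
      tendsto_const_nhds.add tendsto_one_div_nat
    rw [add_zero] at this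
    refine this.congr' ?_
    filter_upwards [eventually_ge_atTop 1] with n hn
    have hn' : (n:ℝ) ≠ 0 := by
      have : (1:ℝ) ≤ n := by exact_mod_cast hn
      linarith
    field_simp
  have h3 : Tendsto (fun n : ℕ => c / n) atTop (nhds 0) := by
    have := tendsto_one_div_nat.const_mul c
    rw [mul_zero] at this
    refine this.congr fun n => ?_
    ring
  have h4 := (h1.mul h2).sub h3
  rw [mul_one, sub_zero] at h4
  refine h4.congr' ?_
  filter_upwards [eventually_ge_atTop 1] with n hn
  have hn0 : (n:ℝ) ≠ 0 := by
    have : (1:ℝ) ≤ n := by exact_mod_cast hn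
    linarith
  have hn1 : (n:ℝ) + 1 ≠ 0 := by positivity
  field_simp

lemma tendsto_tail_div {a : ℕ → ℝ} {L : ℝ}
    (ha : Tendsto (fun n => a n / n) atTop (nhds L)) (m : ℕ) :
    Tendsto (fun n : ℕ => (a n - a (n - m)) / n) atTop (nhds 0) := by
  have h1 : Tendsto (fun n : ℕ => a (n - m) / ((n - m : ℕ) : ℝ)) atTop (nhds L) :=
    ha.comp (tendsto_sub_atTop_nat m)
  have h2 : Tendsto (fun n : ℕ => ((n - m : ℕ) : ℝ) / n) atTop (nhds 1) := by
    have hb : Tendsto (fun n : ℕ => 1 - (m:ℝ) * (1/(n:ℝ))) atTop (nhds (1 - (m:ℝ) * 0)) :=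
      tendsto_const_nhds.sub ((tendsto_one_div_nat.const_mul (m:ℝ)))
    rw [mul_zero, sub_zero] at hb
    refine hb.congr' ?_
    filter_upwards [eventually_ge_atTop (m+1)] with n hn
    have hn0 : (n:ℝ) ≠ 0 := by
      have : (1:ℝ) ≤ n := by exact_mod_cast le_trans (Nat.le_add_left 1 m) hn
      linarith
    rw [Nat.cast_sub (by omega)]
    field_simp
  have h3 := h1.mul h2
  rw [mul_one] at h3
  have h4 : Tendsto (fun n : ℕ => a (n - m) / n) atTop (nhds L) := by
    refine h3.congr' ?_
    filter_upwards [eventually_ge_atTop (m+1)] with n hn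
    have hnm : (1:ℝ) ≤ ((n - m : ℕ) : ℝ) := by
      have : 1 ≤ n - m := by omega
      exact_mod_cast this
    have hnm0 : ((n - m : ℕ) : ℝ) ≠ 0 := by linarith
    field_simp
  have h5 := ha.sub h4
  rw [sub_self] at h5
  refine h5.congr fun n => ?_
  rw [sub_div]

lemma sum_Icc_comp (T : Ω → Ω) (φ : Ω → ℝ) (n : ℕ) (ω : Ω) :
    ∑ k ∈ Finset.Icc 1 n, φ (T^[k] ω) = birkhoffSum T φ (n+1) ω - φ ω := by
  rw [birkhoffSum_succ' T φ n ω]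
  have h : birkhoffSum T φ n (T ω) = ∑ k ∈ Finset.Icc 1 n, φ (T^[k] ω) := by
    rw [birkhoffSum, ← Finset.Ico_add_one_right_eq_Icc, Finset.sum_Ico_eq_sum_range]
    simp only [Nat.succ_sub_one, Nat.add_sub_cancel]
    refine Finset.sum_congr rfl fun i _ => ?_
    rw [Nat.add_comm 1 i, Function.iterate_succ_apply]
  rw [h]; ring

end Shift

section BirkhoffIcc
variable {Ω : Type*} [MeasurableSpace Ω] {μ : MeasureTheory.Measure Ω} {T : Ω → Ω} {f : Ω → ℝ}

theorem birkhoff_icc [IsProbabilityMeasure μ] (hT : Ergodic T μ) (hf : Measurable f)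
    (hfi : Integrable f μ) :
    ∀ᵐ ω ∂μ, Tendsto (fun n : ℕ => (∑ k ∈ Finset.Icc 1 n, f (T^[k] ω)) / n) atTop
      (nhds (∫ ω, f ω ∂μ)) := by
  filter_upwards [birkhoff_ergodic hT hf hfi] with ω hω
  have h := tendsto_shift_div (a := fun n => birkhoffSum T f n ω) hω (f ω)
  refine h.congr fun n => ?_
  rw [sum_Icc_comp]

end BirkhoffIcc
open ENNReal in
/-- Triangular pointwise ergodic lemma: if `gₙ → g` a.e., `sup_{n ≥ 1} |gₙ|` is
integrable and `T` is ergodic measure preserving, then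
`(1/n) ∑_{k=1}^n g_{n-k+1} ∘ Tᵏ → ∫ g dμ` almost everywhere. -/
theorem coboundary_paper_stmt5
    {Ω : Type*} [MeasurableSpace Ω] (μ : Measure Ω) [IsProbabilityMeasure μ]
    (T : Ω → Ω) (hT : Ergodic T μ)
    (g : ℕ → Ω → ℝ) (hmeas : ∀ n, Measurable (g n))
    (glim : Ω → ℝ)
    (hconv : ∀ᵐ ω ∂μ, Tendsto (fun n => g n ω) atTop (nhds (glim ω)))
    (hsup : Integrable (fun ω => ⨆ n : ℕ, |g (n + 1) ω|) μ) :
    ∀ᵐ ω ∂μ, Tendsto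
      (fun n : ℕ => (∑ k ∈ Finset.Icc 1 n, g (n - k + 1) (T^[k] ω)) / n)
      atTop (nhds (∫ ω, glim ω ∂μ)) := by
  classical
  set G : Ω → ℝ := fun ω => ⨆ n : ℕ, |g (n + 1) ω| with hGdef
  -- measurable representative of glim
  have hglim_aem : AEMeasurable glim μ :=
    aemeasurable_of_tendsto_metrizable_ae atTop (fun n => (hmeas n).aemeasurable) hconv
  set glim' : Ω → ℝ := hglim_aem.mk glim with hglim'def
  have hglim'_meas : Measurable glim' := hglim_aem.measurable_mk
  have heq : glim =ᵐ[μ] glim' := hglim_aem.ae_eq_mk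
  have hconv' : ∀ᵐ ω ∂μ, Tendsto (fun n => g n ω) atTop (nhds (glim' ω)) := by
    filter_upwards [hconv, heq] with ω h1 h2; rwa [h2] at h1
  -- ENNReal versions of the sups
  set SE : Ω → ℝ≥0∞ := fun ω => ⨆ j : ℕ, (‖g (j+1) ω‖₊ : ℝ≥0∞) with hSEdef
  have hSEmeas : Measurable SE :=
    Measurable.iSup (fun j => (hmeas (j+1)).nnnorm.coe_nnreal_ennreal)
  set Gm : Ω → ℝ := fun ω => (SE ω).toReal with hGmdef
  have hGm_meas : Measurable Gm := hSEmeas.ennreal_toReal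
  set D : Ω → ℝ := fun ω => Gm ω + |glim' ω| with hDdef
  have hDmeas : Measurable D := hGm_meas.add hglim'_meas.abs
  set HE : ℕ → Ω → ℝ≥0∞ := fun m ω => ⨆ j : ℕ, (‖g (m+1+j) ω - glim' ω‖₊ : ℝ≥0∞) with hHEdef
  set h : ℕ → Ω → ℝ := fun m ω => (HE m ω).toReal with hhdef
  have hhmeas : ∀ m, Measurable (h m) := fun m =>
    (Measurable.iSup (fun j =>
      ((hmeas (m+1+j)).sub hglim'_meas).nnnorm.coe_nnreal_ennreal)).ennreal_toReal
  have hh_nonneg : ∀ m ω, 0 ≤ h m ω := fun m ω => ENNReal.toReal_nonneg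
  -- pointwise facts at points where convergence holds
  have hbdd : ∀ x : Ω, Tendsto (fun n => g n x) atTop (nhds (glim' x)) →
      ∃ C : ℝ, ∀ j : ℕ, |g j x| ≤ C := by
    intro x hx
    obtain ⟨u, hu⟩ := hx.bddAbove_range
    obtain ⟨l, hl⟩ := hx.bddBelow_range
    refine ⟨max u (-l), fun j => abs_le.mpr ⟨?_, ?_⟩⟩
    · have h1 : l ≤ g j x := hl ⟨j, rfl⟩
      have h2 : -l ≤ max u (-l) := le_max_right _ _
      linarith
    · exact (hu ⟨j, rfl⟩).trans (le_max_left _ _)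
  have hSEfin : ∀ x : Ω, (∃ C : ℝ, ∀ j : ℕ, |g j x| ≤ C) → SE x ≠ ⊤ := by
    rintro x ⟨C, hC⟩
    refine ne_top_of_le_ne_top (ofReal_ne_top (r := C)) (iSup_le fun j => ?_)
    rw [← enorm_eq_nnnorm, Real.enorm_eq_ofReal_abs]
    exact ENNReal.ofReal_le_ofReal (hC (j+1))
  have hHEfin : ∀ x : Ω, (∃ C : ℝ, ∀ j : ℕ, |g j x| ≤ C) → ∀ m, HE m x ≠ ⊤ := by
    rintro x ⟨C, hC⟩ m
    refine ne_top_of_le_ne_top (ofReal_ne_top (r := C + |glim' x|)) (iSup_le fun j => ?_)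
    rw [← enorm_eq_nnnorm, Real.enorm_eq_ofReal_abs]
    refine ENNReal.ofReal_le_ofReal ?_
    calc |g (m+1+j) x - glim' x| ≤ |g (m+1+j) x| + |glim' x| := abs_sub _ _
      _ ≤ C + |glim' x| := by linarith [hC (m+1+j)]
  have hGmle : ∀ x : Ω, (∃ C : ℝ, ∀ j : ℕ, |g j x| ≤ C) → ∀ j : ℕ, |g (j+1) x| ≤ Gm x := by
    rintro x hCx j
    have h1 : (‖g (j+1) x‖₊ : ℝ≥0∞) ≤ SE x := le_iSup (fun j => ((‖g (j+1) x‖₊ : ℝ≥0∞))) j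
    have h2 := ENNReal.toReal_mono (hSEfin x hCx) h1
    rwa [ENNReal.coe_toReal, coe_nnnorm, Real.norm_eq_abs] at h2
  have hGmG : ∀ x : Ω, (∃ C : ℝ, ∀ j : ℕ, |g j x| ≤ C) → Gm x ≤ G x := by
    rintro x ⟨C, hC⟩
    have hbddx : BddAbove (Set.range fun j : ℕ => |g (j+1) x|) :=
      ⟨C, by rintro y ⟨j, rfl⟩; exact hC (j+1)⟩
    have hGnonneg : 0 ≤ G x := le_trans (abs_nonneg _) (le_ciSup hbddx 0)
    have h1 : SE x ≤ ENNReal.ofReal (G x) := by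
      refine iSup_le fun j => ?_
      rw [← enorm_eq_nnnorm, Real.enorm_eq_ofReal_abs]
      exact ENNReal.ofReal_le_ofReal (le_ciSup hbddx j)
    have h2 := ENNReal.toReal_mono ofReal_ne_top h1
    rwa [ENNReal.toReal_ofReal hGnonneg] at h2
  have hkey1 : ∀ x : Ω, (∃ C : ℝ, ∀ j : ℕ, |g j x| ≤ C) →
      ∀ m j : ℕ, m + 1 ≤ j → |g j x - glim' x| ≤ h m x := by
    rintro x hCx m j hj
    obtain ⟨i, rfl⟩ : ∃ i, j = m + 1 + i := ⟨j - (m+1), by omega⟩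
    have h1 : (‖g (m+1+i) x - glim' x‖₊ : ℝ≥0∞) ≤ HE m x :=
      le_iSup (fun i => ((‖g (m+1+i) x - glim' x‖₊ : ℝ≥0∞))) i
    have h2 := ENNReal.toReal_mono (hHEfin x hCx m) h1
    rwa [ENNReal.coe_toReal, coe_nnnorm, Real.norm_eq_abs] at h2
  have hkey2 : ∀ x : Ω, (∃ C : ℝ, ∀ j : ℕ, |g j x| ≤ C) →
      ∀ j : ℕ, 1 ≤ j → |g j x - glim' x| ≤ D x := by
    rintro x hCx j hj
    obtain ⟨i, rfl⟩ : ∃ i, j = i + 1 := ⟨j - 1, by omega⟩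
    calc |g (i+1) x - glim' x| ≤ |g (i+1) x| + |glim' x| := abs_sub _ _
      _ ≤ Gm x + |glim' x| := by linarith [hGmle x hCx i]
      _ = D x := rfl
  have hkey3 : ∀ x : Ω, (∃ C : ℝ, ∀ j : ℕ, |g j x| ≤ C) → ∀ m, h m x ≤ D x := by
    rintro x hCx m
    have h1 : HE m x ≤ SE x + ENNReal.ofReal |glim' x| := by
      refine iSup_le fun i => ?_
      rw [← enorm_eq_nnnorm, Real.enorm_eq_ofReal_abs]
      calc ENNReal.ofReal (|g (m+1+i) x - glim' x|)
          ≤ ENNReal.ofReal (|g (m+1+i) x| + |glim' x|) :=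
            ENNReal.ofReal_le_ofReal (abs_sub _ _)
        _ ≤ ENNReal.ofReal (|g (m+1+i) x|) + ENNReal.ofReal (|glim' x|) :=
            ENNReal.ofReal_add_le
        _ ≤ SE x + ENNReal.ofReal (|glim' x|) := by
            refine add_le_add ?_ le_rfl
            rw [← Real.enorm_eq_ofReal_abs]
            have : m + 1 + i = (m + i) + 1 := by omega
            rw [this]
            exact le_iSup (fun j => ((‖g (j+1) x‖₊ : ℝ≥0∞))) (m+i)
    have hfin : SE x + ENNReal.ofReal |glim' x| ≠ ⊤ :=
      ENNReal.add_ne_top.mpr ⟨hSEfin x hCx, ofReal_ne_top⟩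
    have h2 := ENNReal.toReal_mono hfin h1
    rwa [ENNReal.toReal_add (hSEfin x hCx) ofReal_ne_top,
      ENNReal.toReal_ofReal (abs_nonneg _)] at h2
  have hkey4 : ∀ x : Ω, Tendsto (fun n => g n x) atTop (nhds (glim' x)) →
      Tendsto (fun m => h m x) atTop (nhds 0) := by
    intro x hx
    rw [NormedAddCommGroup.tendsto_nhds_zero]
    intro ε hε
    obtain ⟨N, hN⟩ := Metric.tendsto_atTop.mp hx (ε/2) (by linarith)
    filter_upwards [eventually_ge_atTop N] with m hm
    have hle : HE m x ≤ ENNReal.ofReal (ε/2) := by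
      refine iSup_le fun i => ?_
      rw [← enorm_eq_nnnorm, Real.enorm_eq_ofReal_abs]
      refine ENNReal.ofReal_le_ofReal ?_
      have := hN (m+1+i) (by omega)
      rw [Real.dist_eq] at this
      linarith
    have h2 := ENNReal.toReal_mono ofReal_ne_top hle
    rw [ENNReal.toReal_ofReal (by linarith)] at h2
    rw [Real.norm_eq_abs, abs_of_nonneg (hh_nonneg m x)]
    linarith
  -- integrability
  have hGm_int : Integrable Gm μ := by
    refine hsup.mono hGm_meas.aestronglyMeasurable ?_
    filter_upwards [hconv'] with ω hω
    rw [Real.norm_eq_abs, abs_of_nonneg ENNReal.toReal_nonneg, Real.norm_eq_abs]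
    exact (hGmG ω (hbdd ω hω)).trans (le_abs_self _)
  have hglim'_int : Integrable glim' μ := by
    refine hsup.mono hglim'_meas.aestronglyMeasurable ?_
    filter_upwards [hconv'] with ω hω
    rw [Real.norm_eq_abs, Real.norm_eq_abs]
    have hCx := hbdd ω hω
    have hx_abs : Tendsto (fun n : ℕ => |g n ω|) atTop (nhds |glim' ω|) := hω.abs
    have h1 : Tendsto (fun n : ℕ => |g (n+1) ω|) atTop (nhds |glim' ω|) :=
      hx_abs.comp (tendsto_add_atTop_nat 1)
    have h2 : ∀ n : ℕ, |g (n+1) ω| ≤ Gm ω := hGmle ω hCx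
    have h3 : |glim' ω| ≤ Gm ω := le_of_tendsto' h1 h2
    exact h3.trans ((hGmG ω hCx).trans (le_abs_self _))
  have hD_int : Integrable D μ := hGm_int.add hglim'_int.abs
  have hh_int : ∀ m, Integrable (h m) μ := by
    intro m
    refine hD_int.mono (hhmeas m).aestronglyMeasurable ?_
    filter_upwards [hconv'] with ω hω
    rw [Real.norm_eq_abs, abs_of_nonneg (hh_nonneg m ω), Real.norm_eq_abs]
    exact (hkey3 ω (hbdd ω hω) m).trans (le_abs_self _)
  -- ∫ h m → 0
  have hIh : Tendsto (fun m => ∫ ω, h m ω ∂μ) atTop (nhds 0) := by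
    have h0 : Tendsto (fun m => ∫ ω, h m ω ∂μ) atTop (nhds (∫ _ω : Ω, (0:ℝ) ∂μ)) := by
      refine tendsto_integral_of_dominated_convergence D
        (fun m => (hhmeas m).aestronglyMeasurable) hD_int ?_ ?_
      · intro m
        filter_upwards [hconv'] with ω hω
        rw [Real.norm_eq_abs, abs_of_nonneg (hh_nonneg m ω)]
        exact hkey3 ω (hbdd ω hω) m
      · filter_upwards [hconv'] with ω hω
        exact hkey4 ω hω
    rwa [integral_zero] at h0
  -- Birkhoff applications
  have hB1 := birkhoff_icc hT hglim'_meas hglim'_int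
  have hB2 : ∀ m, ∀ᵐ ω ∂μ, Tendsto
      (fun n : ℕ => (∑ k ∈ Finset.Icc 1 n, h m (T^[k] ω)) / n) atTop
      (nhds (∫ ω, h m ω ∂μ)) := fun m => birkhoff_icc hT (hhmeas m) (hh_int m)
  have hB3 := birkhoff_icc hT hDmeas hD_int
  -- good points at all iterates
  have hPae : ∀ᵐ ω ∂μ, ∀ k : ℕ,
      Tendsto (fun n => g n (T^[k] ω)) atTop (nhds (glim' (T^[k] ω))) := by
    rw [ae_all_iff]
    intro k
    exact (hT.toMeasurePreserving.iterate k).quasiMeasurePreserving.ae hconv'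
  -- rewrite the target integral
  have hIg : ∫ ω, glim ω ∂μ = ∫ ω, glim' ω ∂μ := integral_congr_ae heq
  rw [hIg]
  -- main pointwise argument
  filter_upwards [hPae, hB1, ae_all_iff.mpr hB2, hB3] with ω hPk hBglim hBh hBD
  set c : ℕ → ℝ := fun n => ∑ k ∈ Finset.Icc 1 n, D (T^[k] ω) with hcdef
  set R : ℕ → ℝ := fun n =>
    (∑ k ∈ Finset.Icc 1 n, |g (n - k + 1) (T^[k] ω) - glim' (T^[k] ω)|) / n with hRdef
  have hR_nonneg : ∀ n, 0 ≤ R n := fun n =>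
    div_nonneg (Finset.sum_nonneg fun k _ => abs_nonneg _) (Nat.cast_nonneg n)
  -- tail estimate
  have htail := tendsto_tail_div (a := c) hBD
  -- R → 0
  have hR0 : Tendsto R atTop (nhds 0) := by
    rw [NormedAddCommGroup.tendsto_nhds_zero]
    intro ε hε
    obtain ⟨m, hm⟩ := (hIh.eventually_lt_const (show (0:ℝ) < ε/2 by linarith)).exists
    have htailm := tendsto_tail_div (a := c) hBD m
    have hev1 := Tendsto.eventually_lt_const hm (hBh m)
    have hev2 : ∀ᶠ n : ℕ in atTop, (c n - c (n - m)) / n < ε/2 := by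
      have := htailm.eventually_lt_const (show (0:ℝ) < ε/2 by linarith)
      exact this
    filter_upwards [hev1, hev2, eventually_ge_atTop (m+1)] with n hn1 hn2 hnm
    have hnpos : (0:ℝ) < n := by
      have h1 : 0 < n := by omega
      exact_mod_cast h1
    -- split the sum
    have hsplit : ∑ k ∈ Finset.Icc 1 n, |g (n - k + 1) (T^[k] ω) - glim' (T^[k] ω)|
        ≤ (∑ k ∈ Finset.Icc 1 n, h m (T^[k] ω)) + (c n - c (n - m)) := by
      have hIcc : ∀ j : ℕ, Finset.Icc 1 j = Finset.Ioc 0 j := fun j => Finset.Icc_add_one_left_eq_Ioc 0 j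
      have hcons : (∑ k ∈ Finset.Ioc 0 (n-m), D (T^[k] ω))
          + (∑ k ∈ Finset.Ioc (n-m) n, D (T^[k] ω)) = ∑ k ∈ Finset.Ioc 0 n, D (T^[k] ω) :=
        Finset.sum_Ioc_consecutive _ (by omega) (by omega)
      have hctail : ∑ k ∈ Finset.Ioc (n-m) n, D (T^[k] ω) = c n - c (n - m) := by
        rw [hcdef]; simp only [hIcc]; linarith [hcons]
      have hsplitsum : ∑ k ∈ Finset.Ioc 0 n, |g (n - k + 1) (T^[k] ω) - glim' (T^[k] ω)|
          = (∑ k ∈ Finset.Ioc 0 (n-m), |g (n - k + 1) (T^[k] ω) - glim' (T^[k] ω)|)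
            + ∑ k ∈ Finset.Ioc (n-m) n, |g (n - k + 1) (T^[k] ω) - glim' (T^[k] ω)| :=
        (Finset.sum_Ioc_consecutive _ (by omega) (by omega)).symm
      rw [hIcc, hsplitsum, ← hctail]
      refine add_le_add ?_ ?_
      · calc ∑ k ∈ Finset.Ioc 0 (n-m), |g (n - k + 1) (T^[k] ω) - glim' (T^[k] ω)|
            ≤ ∑ k ∈ Finset.Ioc 0 (n-m), h m (T^[k] ω) := by
              refine Finset.sum_le_sum fun k hk => ?_
              rw [Finset.mem_Ioc] at hk
              exact hkey1 (T^[k] ω) (hbdd _ (hPk k)) m (n - k + 1) (by omega)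
          _ ≤ ∑ k ∈ Finset.Ioc 0 n, h m (T^[k] ω) := by
              refine Finset.sum_le_sum_of_subset_of_nonneg
                (Finset.Ioc_subset_Ioc le_rfl (by omega)) fun k _ _ => hh_nonneg m _
      · refine Finset.sum_le_sum fun k hk => ?_
        rw [Finset.mem_Ioc] at hk
        exact hkey2 (T^[k] ω) (hbdd _ (hPk k)) (n - k + 1) (by omega)
    have hRle : R n ≤ (∑ k ∈ Finset.Icc 1 n, h m (T^[k] ω)) / n + (c n - c (n - m)) / n := by
      simp only [hRdef]
      rw [← add_div]
      gcongr
    rw [Real.norm_eq_abs, abs_of_nonneg (hR_nonneg n)]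
    calc R n ≤ (∑ k ∈ Finset.Icc 1 n, h m (T^[k] ω)) / n + (c n - c (n - m)) / n := hRle
      _ < ε/2 + ε/2 := add_lt_add hn1 hn2
      _ = ε := by ring
  -- combine
  have hABR : ∀ n : ℕ,
      ‖(∑ k ∈ Finset.Icc 1 n, g (n - k + 1) (T^[k] ω)) / n
        - (∑ k ∈ Finset.Icc 1 n, glim' (T^[k] ω)) / n‖ ≤ R n := by
    intro n
    rw [Real.norm_eq_abs, div_sub_div_same, ← Finset.sum_sub_distrib, abs_div, Nat.abs_cast]
    simp only [hRdef]
    gcongr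
    exact Finset.abs_sum_le_sum_abs _ _
  have hAB : Tendsto (fun n : ℕ => (∑ k ∈ Finset.Icc 1 n, g (n - k + 1) (T^[k] ω)) / n
      - (∑ k ∈ Finset.Icc 1 n, glim' (T^[k] ω)) / n) atTop (nhds 0) :=
    squeeze_zero_norm hABR hR0
  have hfinal := hBglim.add hAB
  rw [add_zero] at hfinal
  refine hfinal.congr fun n => ?_
  ring
end

section
/- Let f ∈ L²(μ) be ℱ₀-measurable with mean zero, E(f | ℱ_{−∞}) = 0, and suppose Σ_{i≤0} ‖Pᵢf‖₂ < ∞ where Pᵢg = E(g|ℱᵢ) − E(g|ℱ_{i−1}). Then the decomposition Sₙ(f) − E(Sₙ(f)|ℱ₀) = Σ_{j=1}^n Uʲ g_{n−j+1} holds, where g_k = P₀(U⁻¹S_k(f)), and the summands Y_{n,j} = Uʲg_{n−j+1}/√n form a martingale difference array with respect to (ℱⱼ). -/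
open MeasureTheory Filter

private lemma comp_ae_eq' {Ω : Type*} {mΩ : MeasurableSpace Ω} {μ : Measure Ω}
    {S : Ω → Ω} (hS : MeasurePreserving S μ μ) {h1 h2 : Ω → ℝ}
    (h : h1 =ᵐ[μ] h2) : h1 ∘ S =ᵐ[μ] h2 ∘ S :=
  h.comp_tendsto hS.quasiMeasurePreserving.tendsto_ae

private lemma integrable_comp' {Ω : Type*} {mΩ : MeasurableSpace Ω} {μ : Measure Ω}
    {S : Ω → Ω} (hS : MeasurePreserving S μ μ) {g : Ω → ℝ}
    (hg : Integrable g μ) : Integrable (g ∘ S) μ :=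
  memLp_one_iff_integrable.mp ((memLp_one_iff_integrable.mpr hg).comp_measurePreserving hS)

private lemma condexp_comp_step {Ω : Type*} {m mΩ : MeasurableSpace Ω} {μ : Measure Ω}
    [IsProbabilityMeasure μ] (T : Ω ≃ᵐ Ω) (hμT : MeasurePreserving T μ μ)
    (hm : m ≤ mΩ) (hmc : m.comap T ≤ mΩ)
    {g : Ω → ℝ} (hg : Integrable g μ) :
    μ[(g ∘ ⇑T) | m.comap ⇑T] =ᵐ[μ] (μ[g | m]) ∘ ⇑T := by
  have hgT : Integrable (g ∘ ⇑T) μ := integrable_comp' hμT hg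
  have hmeasT : @Measurable Ω Ω (m.comap ⇑T) m ⇑T := fun t ht => ⟨t, ht, rfl⟩
  refine (ae_eq_condExp_of_forall_setIntegral_eq hmc hgT ?_ ?_ ?_).symm
  · intro s _ _
    exact (integrable_comp' hμT integrable_condExp).integrableOn
  · intro s hs _
    obtain ⟨t, ht, rfl⟩ := hs
    have e1 := (MeasureTheory.setIntegral_map_equiv (μ:=μ) T (μ[g|m]) t).symm
    have e2 := (MeasureTheory.setIntegral_map_equiv (μ:=μ) T g t).symm
    rw [hμT.map_eq] at e1 e2
    simp only [Function.comp_apply]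
    rw [e1, e2, setIntegral_condExp hm hg ht]
  · exact (stronglyMeasurable_condExp.comp_measurable hmeasT).aestronglyMeasurable

/-- Under Hannan's condition, the decomposition
`Sₙ(f) - E(Sₙ(f)|ℱ₀) = ∑_{j=1}^n Uʲ g_{n-j+1}` holds with `g_k = P₀(U⁻¹S_k(f))`,
and the summands `Y_{n,j} = Uʲg_{n-j+1}/√n` form a martingale difference array
with respect to the filtration `(ℱⱼ)`. -/
theorem coboundary_paper_stmt10
    {Ω : Type*} {mΩ : MeasurableSpace Ω} (μ : Measure Ω) [IsProbabilityMeasure μ]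
    (T : Ω ≃ᵐ Ω) (hT : Ergodic T μ)
    (ℱ : ℤ → MeasurableSpace Ω) (hle : ∀ i, ℱ i ≤ mΩ) (hmono : Monotone ℱ)
    (hshift : ∀ i, ℱ (i + 1) = (ℱ i).comap T)
    (f : Ω → ℝ) (hf2 : MemLp f 2 μ) (hf0 : ∫ ω, f ω ∂μ = 0)
    (hfmeas : StronglyMeasurable[ℱ 0] f)
    (htail : μ[f | ⨅ i : ℤ, ℱ i] =ᵐ[μ] 0)
    (hannan : ∑' k : ℕ,
      eLpNorm (μ[f | ℱ (-(k : ℤ))] - μ[f | ℱ (-(k : ℤ) - 1)]) 2 μ ≠ ⊤)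
    (gk : ℕ → Ω → ℝ)
    (hgk : ∀ k, gk k =
      (μ[(fun ω => ∑ j ∈ Finset.range k, f ((⇑T)^[j] ω)) | ℱ 0]) -
        (μ[(fun ω => ∑ j ∈ Finset.range k, f ((⇑T)^[j] ω)) | ℱ (-1)])) :
    (∀ n : ℕ, 1 ≤ n →
      (fun ω => (∑ j ∈ Finset.Icc 1 n, f ((⇑T)^[j] ω)) -
          (μ[(fun ω' => ∑ j ∈ Finset.Icc 1 n, f ((⇑T)^[j] ω')) | ℱ 0]) ω)
        =ᵐ[μ] fun ω => ∑ j ∈ Finset.Icc 1 n, gk (n - j + 1) ((⇑T)^[j] ω)) ∧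
    (∀ n : ℕ, ∀ j : ℕ, 1 ≤ j → j ≤ n →
      AEStronglyMeasurable[ℱ j]
        (fun ω => gk (n - j + 1) ((⇑T)^[j] ω) / Real.sqrt n) μ ∧
      μ[(fun ω => gk (n - j + 1) ((⇑T)^[j] ω) / Real.sqrt n) | ℱ ((j : ℤ) - 1)]
        =ᵐ[μ] 0) := by
  classical
  have hμT : MeasurePreserving (⇑T) μ μ := hT.toMeasurePreserving
  have hfint : Integrable f μ := hf2.integrable one_le_two
  -- comap of iterates
  have hcomap : ∀ (i : ℤ) (j : ℕ), ℱ (i + j) = (ℱ i).comap ((⇑T)^[j]) := by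
    intro i j
    induction j with
    | zero => simp [MeasurableSpace.comap_id]
    | succ j ih =>
      have h1 : (i + ((j : ℕ) + 1 : ℕ) : ℤ) = (i + j) + 1 := by push_cast; ring
      rw [h1, hshift, ih, MeasurableSpace.comap_comp, ← Function.iterate_succ]
  have hint : ∀ (g : Ω → ℝ), Integrable g μ → ∀ j : ℕ, Integrable (g ∘ (⇑T)^[j]) μ :=
    fun g hg j => integrable_comp' (hμT.iterate j) hg
  -- intertwining for iterates
  have hinter : ∀ (i : ℤ) (j : ℕ) (g : Ω → ℝ), Integrable g μ →
      μ[(g ∘ (⇑T)^[j]) | ℱ (i + j)] =ᵐ[μ] (μ[g | ℱ i]) ∘ (⇑T)^[j] := by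
    intro i j
    induction j with
    | zero => intro g hg; simp
    | succ j ih =>
      intro g hg
      have h1 : (g ∘ (⇑T)^[j + 1]) = (g ∘ (⇑T)^[j]) ∘ ⇑T := by
        rw [Function.iterate_succ]; rfl
      have h2 : ℱ (i + ((j : ℕ) + 1 : ℕ)) = ((ℱ (i + j)).comap ⇑T) := by
        have h3 : (i + ((j : ℕ) + 1 : ℕ) : ℤ) = (i + j) + 1 := by push_cast; ring
        rw [h3, hshift]
      have h3 : (ℱ (i + j)).comap ⇑T ≤ mΩ := by rw [← h2]; exact hle _
      calc μ[(g ∘ (⇑T)^[j + 1]) | ℱ (i + ((j : ℕ) + 1 : ℕ))]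
          = μ[((g ∘ (⇑T)^[j]) ∘ ⇑T) | (ℱ (i + j)).comap ⇑T] := by rw [h1, h2]
        _ =ᵐ[μ] (μ[(g ∘ (⇑T)^[j]) | ℱ (i + j)]) ∘ ⇑T :=
            condexp_comp_step T hμT (hle _) h3 (hint g hg j)
        _ =ᵐ[μ] ((μ[g | ℱ i]) ∘ (⇑T)^[j]) ∘ ⇑T := comp_ae_eq' hμT (ih g hg)
        _ = (μ[g | ℱ i]) ∘ (⇑T)^[j + 1] := by rw [Function.iterate_succ]; rfl
  have hgkint : ∀ k, Integrable (gk k) μ := by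
    intro k; rw [hgk k]; exact integrable_condExp.sub integrable_condExp
  have hgk0 : ∀ k, μ[gk k | ℱ (-1)] =ᵐ[μ] 0 := by
    intro k
    rw [hgk k]
    calc μ[(μ[(fun ω => ∑ j ∈ Finset.range k, f ((⇑T)^[j] ω)) | ℱ 0]) -
          (μ[(fun ω => ∑ j ∈ Finset.range k, f ((⇑T)^[j] ω)) | ℱ (-1)]) | ℱ (-1)]
        =ᵐ[μ] μ[μ[(fun ω => ∑ j ∈ Finset.range k, f ((⇑T)^[j] ω)) | ℱ 0] | ℱ (-1)] -
            μ[μ[(fun ω => ∑ j ∈ Finset.range k, f ((⇑T)^[j] ω)) | ℱ (-1)] | ℱ (-1)] :=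
          condExp_sub integrable_condExp integrable_condExp _
      _ =ᵐ[μ] μ[(fun ω => ∑ j ∈ Finset.range k, f ((⇑T)^[j] ω)) | ℱ (-1)] -
            μ[(fun ω => ∑ j ∈ Finset.range k, f ((⇑T)^[j] ω)) | ℱ (-1)] :=
          (condExp_condExp_of_le (hmono (by norm_num)) (hle 0)).sub
            (condExp_condExp_of_le le_rfl (hle (-1)))
      _ = 0 := sub_self _
  constructor
  · -- the decomposition
    intro n hn
    set C : ℕ → Ω → ℝ :=
      fun i => μ[(fun ω => ∑ m ∈ Finset.Icc (i + 1) n, f ((⇑T)^[m] ω)) | ℱ (i : ℤ)] with hC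
    have hAint : ∀ j : ℕ, Integrable (fun ω => ∑ m ∈ Finset.Icc j n, f ((⇑T)^[m] ω)) μ :=
      fun j => integrable_finset_sum _ (fun m _ => hint f hfint m)
    have hterm : ∀ j : ℕ, 1 ≤ j → j ≤ n →
        (fun ω => gk (n - j + 1) ((⇑T)^[j] ω)) =ᵐ[μ]
          fun ω => f ((⇑T)^[j] ω) + C j ω - C (j - 1) ω := by
      intro j hj1 hjn
      have hFint : Integrable (fun ω => ∑ i ∈ Finset.range (n - j + 1), f ((⇑T)^[i] ω)) μ :=
        integrable_finset_sum _ (fun m _ => hint f hfint m)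
      have hc : (fun ω => ∑ i ∈ Finset.range (n - j + 1), f ((⇑T)^[i] ω)) ∘ (⇑T)^[j] =
          fun ω => ∑ m ∈ Finset.Icc j n, f ((⇑T)^[m] ω) := by
        funext ω
        simp only [Function.comp_apply]
        rw [← Finset.Ico_add_one_right_eq_Icc, Finset.sum_Ico_eq_sum_range]
        have h4 : n + 1 - j = n - j + 1 := by omega
        rw [h4]
        refine Finset.sum_congr rfl fun i _ => ?_
        rw [← Function.iterate_add_apply, Nat.add_comm i j]
      have e0 := hinter 0 j _ hFint
      have e1 := hinter (-1) j _ hFint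
      rw [hc] at e0 e1
      have h1 : (fun ω => gk (n - j + 1) ((⇑T)^[j] ω)) =ᵐ[μ]
          μ[(fun ω => ∑ m ∈ Finset.Icc j n, f ((⇑T)^[m] ω)) | ℱ ((0 : ℤ) + j)] -
            μ[(fun ω => ∑ m ∈ Finset.Icc j n, f ((⇑T)^[m] ω)) | ℱ ((-1 : ℤ) + j)] := by
        filter_upwards [e0, e1] with ω h0 h1'
        simp only [Function.comp_apply] at h0 h1'
        rw [hgk]
        simp only [Pi.sub_apply]
        rw [h0, h1']
      have hsplit : (fun ω => ∑ m ∈ Finset.Icc j n, f ((⇑T)^[m] ω)) =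
          (fun ω => f ((⇑T)^[j] ω)) + fun ω => ∑ m ∈ Finset.Icc (j + 1) n, f ((⇑T)^[m] ω) := by
        funext ω
        simp only [Pi.add_apply]
        rw [Finset.Icc_eq_cons_Ioc hjn, Finset.sum_cons, ← Finset.Icc_add_one_left_eq_Ioc]
      have hd : μ[(fun ω => ∑ m ∈ Finset.Icc j n, f ((⇑T)^[m] ω)) | ℱ ((0 : ℤ) + j)]
          =ᵐ[μ] fun ω => f ((⇑T)^[j] ω) + C j ω := by
        rw [hsplit]
        refine (condExp_add (hint f hfint j) (hAint (j + 1)) _).trans ?_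
        have hfj : μ[(f ∘ (⇑T)^[j]) | ℱ ((0 : ℤ) + j)] = f ∘ (⇑T)^[j] := by
          refine condExp_of_stronglyMeasurable (hle _) ?_ (hint f hfint j)
          rw [hcomap 0 j]
          exact hfmeas.comp_measurable (fun t ht => ⟨t, ht, rfl⟩)
        rw [hfj]
        have h5 : ((0 : ℤ) + j) = (j : ℤ) := zero_add _
        rw [h5]
        exact Filter.EventuallyEq.of_eq (funext fun ω => rfl)
      have he : C (j - 1) =
          μ[(fun ω => ∑ m ∈ Finset.Icc j n, f ((⇑T)^[m] ω)) | ℱ ((-1 : ℤ) + j)] := by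
        simp only [hC]
        have h4 : j - 1 + 1 = j := by omega
        have h5 : ((j - 1 : ℕ) : ℤ) = -1 + (j : ℤ) := by omega
        rw [h4, h5]
      refine h1.trans ?_
      rw [← he]
      filter_upwards [hd] with ω hω
      simp only [Pi.sub_apply]
      rw [hω]
    have hCn : C n = 0 := by
      rw [hC]
      have h : Finset.Icc (n + 1) n = ∅ := Finset.Icc_eq_empty (by omega)
      simp only [h, Finset.sum_empty]
      exact condExp_zero
    have hC0 : C 0 = μ[(fun ω' => ∑ j ∈ Finset.Icc 1 n, f ((⇑T)^[j] ω')) | ℱ 0] := by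
      rw [hC]
      norm_num
    have hall : ∀ᵐ ω ∂μ, ∀ j ∈ (Finset.Icc 1 n : Finset ℕ),
        gk (n - j + 1) ((⇑T)^[j] ω) = f ((⇑T)^[j] ω) + C j ω - C (j - 1) ω := by
      rw [Filter.eventually_all_finset]
      intro j hj
      exact hterm j (Finset.mem_Icc.mp hj).1 (Finset.mem_Icc.mp hj).2
    refine EventuallyEq.symm ?_
    filter_upwards [hall] with ω hω
    have htel : ∑ j ∈ Finset.Icc 1 n, (C j ω - C (j - 1) ω) = C n ω - C 0 ω := by
      rw [← Finset.Ico_add_one_right_eq_Icc, Finset.sum_Ico_eq_sum_range]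
      have h6 : n + 1 - 1 = n := by omega
      rw [h6]
      calc ∑ k ∈ Finset.range n, (C (1 + k) ω - C (1 + k - 1) ω)
          = ∑ k ∈ Finset.range n, (C (k + 1) ω - C k ω) :=
            Finset.sum_congr rfl (fun k _ => by rw [Nat.add_comm 1 k, Nat.add_sub_cancel])
        _ = C n ω - C 0 ω := Finset.sum_range_sub (fun i => C i ω) n
    calc ∑ j ∈ Finset.Icc 1 n, gk (n - j + 1) ((⇑T)^[j] ω)
        = ∑ j ∈ Finset.Icc 1 n, (f ((⇑T)^[j] ω) + C j ω - C (j - 1) ω) :=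
          Finset.sum_congr rfl hω
      _ = (∑ j ∈ Finset.Icc 1 n, f ((⇑T)^[j] ω)) +
            ∑ j ∈ Finset.Icc 1 n, (C j ω - C (j - 1) ω) := by
          rw [← Finset.sum_add_distrib]
          exact Finset.sum_congr rfl (fun j _ => by ring)
      _ = (∑ j ∈ Finset.Icc 1 n, f ((⇑T)^[j] ω)) + (C n ω - C 0 ω) := by rw [htel]
      _ = (∑ j ∈ Finset.Icc 1 n, f ((⇑T)^[j] ω)) -
            (μ[(fun ω' => ∑ j ∈ Finset.Icc 1 n, f ((⇑T)^[j] ω')) | ℱ 0]) ω := by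
          rw [hCn, ← hC0]
          simp [sub_eq_add_neg]
  · -- martingale differences
    intro n j hj1 hjn
    have h0 : StronglyMeasurable[ℱ 0] (gk (n - j + 1)) := by
      rw [hgk]
      exact stronglyMeasurable_condExp.sub
        (stronglyMeasurable_condExp.mono (hmono (by norm_num)))
    have h2 : ℱ (j : ℤ) = (ℱ 0).comap ((⇑T)^[j]) := by
      have := hcomap 0 j; rwa [zero_add] at this
    have hmeasj : @Measurable Ω Ω ((ℱ 0).comap ((⇑T)^[j])) (ℱ 0) ((⇑T)^[j]) :=
      fun t ht => ⟨t, ht, rfl⟩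
    have hgmeas : StronglyMeasurable[ℱ (j : ℤ)]
        (fun ω => gk (n - j + 1) ((⇑T)^[j] ω) / Real.sqrt n) := by
      rw [h2]
      have hm := (h0.comp_measurable hmeasj).mul_const (Real.sqrt n)⁻¹
      simpa only [div_eq_mul_inv, Function.comp_apply] using hm
    refine ⟨hgmeas.aestronglyMeasurable, ?_⟩
    have hidx : ((j : ℤ) - 1) = (-1 + (j : ℕ) : ℤ) := by push_cast; ring
    have h3 : μ[(gk (n - j + 1) ∘ (⇑T)^[j]) | ℱ ((j : ℤ) - 1)] =ᵐ[μ] 0 := by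
      rw [hidx]
      calc μ[(gk (n - j + 1) ∘ (⇑T)^[j]) | ℱ ((-1 : ℤ) + j)]
          =ᵐ[μ] (μ[gk (n - j + 1) | ℱ (-1)]) ∘ (⇑T)^[j] :=
            hinter (-1) j (gk (n - j + 1)) (hgkint (n - j + 1))
        _ =ᵐ[μ] (0 : Ω → ℝ) ∘ (⇑T)^[j] := comp_ae_eq' (hμT.iterate j) (hgk0 (n - j + 1))
        _ = 0 := rfl
    have heq : (fun ω => gk (n - j + 1) ((⇑T)^[j] ω) / Real.sqrt n) =
        (Real.sqrt n)⁻¹ • (gk (n - j + 1) ∘ (⇑T)^[j]) := by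
      funext ω
      simp [div_eq_inv_mul]
    rw [heq]
    calc μ[(Real.sqrt n)⁻¹ • (gk (n - j + 1) ∘ (⇑T)^[j]) | ℱ ((j : ℤ) - 1)]
        =ᵐ[μ] (Real.sqrt n)⁻¹ • μ[(gk (n - j + 1) ∘ (⇑T)^[j]) | ℱ ((j : ℤ) - 1)] :=
          condExp_smul _ _ _
      _ =ᵐ[μ] 0 := by
          filter_upwards [h3] with ω hω
          simp only [Pi.smul_apply, hω, Pi.zero_apply, smul_zero]
end

section
/- Under Hannan's condition, with g_n = P₀(U⁻¹Sₙ(f)) → m a.e. and sup_n|g_n| square-integrable, one has (1/n) Σ_{j=1}^n (Uʲ g_{n−j+1})² → ‖m‖₂² almost everywhere. -/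
open MeasureTheory Filter Topology



section CoboundaryAux

set_option linter.unusedSectionVars false

variable {Ω : Type*} [MeasurableSpace Ω] {μ : MeasureTheory.Measure Ω} [IsProbabilityMeasure μ]

/-- Birkhoff sums. -/
def BSsum (T : Ω → Ω) (g : Ω → ℝ) (n : ℕ) (x : Ω) : ℝ := ∑ i ∈ Finset.range n, g (T^[i] x)

lemma BSsum_succ (T : Ω → Ω) (g : Ω → ℝ) (n : ℕ) (x : Ω) :
    BSsum T g (n + 1) x = g x + BSsum T g n (T x) := by
  unfold BSsum
  rw [Finset.sum_range_succ']
  simp only [Function.iterate_succ_apply, Function.iterate_zero_apply]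
  ring

lemma BSsum_zero (T : Ω → Ω) (g : Ω → ℝ) (x : Ω) : BSsum T g 0 x = 0 := by simp [BSsum]

lemma BSsum_measurable {T : Ω → Ω} (hT : Measurable T) {g : Ω → ℝ} (hg : Measurable g) (n : ℕ) :
    Measurable (BSsum T g n) :=
  Finset.measurable_sum _ fun i _ => hg.comp (hT.iterate i)

lemma BSsum_integrable {T : Ω → Ω} (hT : MeasurePreserving T μ μ) {g : Ω → ℝ}
    (hg : Integrable g μ) (n : ℕ) : Integrable (BSsum T g n) μ :=
  integrable_finset_sum _ fun i _ =>
    ((hT.iterate i).integrable_comp hg.aestronglyMeasurable).mpr hg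

lemma BSsum_neg (T : Ω → Ω) (g : Ω → ℝ) (n : ℕ) (x : Ω) :
    BSsum T (fun y => -g y) n x = -(BSsum T g n x) := by
  simp [BSsum]

/-- running maxima of Birkhoff sums, with `Phi T g 0 = 0`. -/
def PhiMax (T : Ω → Ω) (g : Ω → ℝ) : ℕ → Ω → ℝ
  | 0 => fun _ => 0
  | (N+1) => fun x => max (PhiMax T g N x) (BSsum T g (N+1) x)

lemma PhiMax_nonneg (T : Ω → Ω) (g : Ω → ℝ) (N : ℕ) (x : Ω) : 0 ≤ PhiMax T g N x := by
  induction N with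
  | zero => simp [PhiMax]
  | succ N IH => exact IH.trans (le_max_left _ _)

lemma PhiMax_mono (T : Ω → Ω) (g : Ω → ℝ) (x : Ω) {N M : ℕ} (h : N ≤ M) :
    PhiMax T g N x ≤ PhiMax T g M x := by
  have : Monotone (fun N => PhiMax T g N x) :=
    monotone_nat_of_le_succ fun N => le_max_left _ _
  exact this h

lemma BSsum_le_PhiMax (T : Ω → Ω) (g : Ω → ℝ) (x : Ω) {k N : ℕ} (h : k ≤ N) :
    BSsum T g k x ≤ PhiMax T g N x := by
  match k with
  | 0 => rw [BSsum_zero]; exact PhiMax_nonneg T g N x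
  | (k+1) => exact (le_max_right (PhiMax T g k x) _).trans (PhiMax_mono T g x h)

lemma PhiMax_measurable {T : Ω → Ω} (hT : Measurable T) {g : Ω → ℝ} (hg : Measurable g) (N : ℕ) :
    Measurable (PhiMax T g N) := by
  induction N with
  | zero => exact measurable_const
  | succ N IH => exact IH.max (BSsum_measurable hT hg (N+1))

lemma PhiMax_integrable {T : Ω → Ω} (hT : MeasurePreserving T μ μ) {g : Ω → ℝ}
    (hg : Integrable g μ) (N : ℕ) : Integrable (PhiMax T g N) μ := by
  induction N with
  | zero => exact (integrable_const 0).congr (by simp [PhiMax])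
  | succ N IH =>
    have := IH.sup (BSsum_integrable hT hg (N+1))
    exact this.congr (ae_of_all _ fun x => by simp [PhiMax, Pi.sup_apply])

lemma PhiMax_pos_le (T : Ω → Ω) (g : Ω → ℝ) {N : ℕ} {x : Ω} (hpos : 0 < PhiMax T g N x) :
    PhiMax T g N x ≤ g x + PhiMax T g N (T x) := by
  induction N with
  | zero => simp [PhiMax] at hpos
  | succ N IH =>
    rcases max_choice (PhiMax T g N x) (BSsum T g (N+1) x) with heq | heq
    · have h1 : PhiMax T g (N+1) x = PhiMax T g N x := heq
      rw [h1] at hpos ⊢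
      exact (IH hpos).trans (by gcongr; exact le_max_left _ _)
    · have h1 : PhiMax T g (N+1) x = BSsum T g (N+1) x := heq
      rw [h1, BSsum_succ]
      gcongr
      exact BSsum_le_PhiMax T g (T x) (Nat.le_succ N)

/-- The maximal ergodic theorem. -/
lemma maximal_erg {T : Ω → Ω} (hT : MeasurePreserving T μ μ) (hemb : MeasurableEmbedding T)
    {g : Ω → ℝ} (hgm : Measurable g) (hgi : Integrable g μ) (N : ℕ) :
    0 ≤ ∫ x in {x | 0 < PhiMax T g N x}, g x ∂μ := by
  set E := {x | 0 < PhiMax T g N x} with hE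
  have hTm : Measurable T := hT.measurable
  have hEmeas : MeasurableSet E :=
    measurableSet_lt measurable_const (PhiMax_measurable hTm hgm N)
  have hΦi : Integrable (PhiMax T g N) μ := PhiMax_integrable hT hgi N
  have hΦTi : Integrable (fun x => PhiMax T g N (T x)) μ := (hT.integrable_comp hΦi.aestronglyMeasurable).mpr hΦi
  have h1 : ∫ x in E, (PhiMax T g N x - PhiMax T g N (T x)) ∂μ ≤ ∫ x in E, g x ∂μ := by
    refine setIntegral_mono_on ((hΦi.sub hΦTi).integrableOn) hgi.integrableOn hEmeas ?_
    intro x hx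
    have := PhiMax_pos_le T g (hx : 0 < PhiMax T g N x)
    linarith
  have h5 : ∫ x in E, (PhiMax T g N x - PhiMax T g N (T x)) ∂μ
      = (∫ x in E, PhiMax T g N x ∂μ) - ∫ x in E, PhiMax T g N (T x) ∂μ :=
    integral_sub hΦi.integrableOn hΦTi.integrableOn
  have h2 : ∫ x in E, PhiMax T g N x ∂μ = ∫ x, PhiMax T g N x ∂μ := by
    have hcompl : ∫ x in Eᶜ, PhiMax T g N x ∂μ = 0 := by
      rw [setIntegral_congr_fun hEmeas.compl (g := fun _ => (0:ℝ))
        (fun x hx => le_antisymm (not_lt.mp hx) (PhiMax_nonneg T g N x))]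
      simp
    have := integral_add_compl hEmeas hΦi
    linarith
  have h3 : ∫ x in E, PhiMax T g N (T x) ∂μ ≤ ∫ x, PhiMax T g N (T x) ∂μ :=
    setIntegral_le_integral hΦTi (ae_of_all _ fun x => PhiMax_nonneg T g N (T x))
  have h4 : ∫ x, PhiMax T g N (T x) ∂μ = ∫ x, PhiMax T g N x ∂μ :=
    hT.integral_comp hemb _
  linarith

lemma BSsum_sub_const (T : Ω → Ω) (g : Ω → ℝ) (c : ℝ) (n : ℕ) (x : Ω) :
    BSsum T (fun y => g y - c) n x = BSsum T g n x - n * c := by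
  simp [BSsum, Finset.sum_sub_distrib, Finset.card_range, mul_comm]

lemma BSsum_def (T : Ω → Ω) (g : Ω → ℝ) (n : ℕ) (x : Ω) :
    BSsum T g n x = ∑ i ∈ Finset.range n, g (T^[i] x) := rfl

/-- a.e., the Birkhoff sums of a function with negative integral are bounded above. -/
lemma ae_bdd_of_integral_neg {T : Ω → Ω} (hT : Ergodic T μ) (hemb : MeasurableEmbedding T)
    {g : Ω → ℝ} (hgm : Measurable g) (hgi : Integrable g μ) (hneg : ∫ x, g x ∂μ < 0) :
    ∀ᵐ x ∂μ, ∃ C : ℕ, ∀ n, BSsum T g n x ≤ C := by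
  have hTm : Measurable T := hT.toMeasurePreserving.measurable
  set B := {x | ∀ C : ℕ, ∃ n, (C : ℝ) < BSsum T g n x} with hB
  have hBmeas : MeasurableSet B := by
    have : B = ⋂ C : ℕ, ⋃ n : ℕ, {x | (C : ℝ) < BSsum T g n x} := by
      ext x; simp [hB]
    rw [this]
    exact MeasurableSet.iInter fun C => MeasurableSet.iUnion fun n =>
      measurableSet_lt measurable_const (BSsum_measurable hTm hgm n)
  have hBinv : T ⁻¹' B = B := by
    ext x
    simp only [Set.mem_preimage, hB, Set.mem_setOf_eq]
    constructor
    · intro hx C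
      obtain ⟨n, hn⟩ := hx (C + ⌈|g x|⌉₊)
      refine ⟨n + 1, ?_⟩
      rw [BSsum_succ]
      have h1 : |g x| ≤ (⌈|g x|⌉₊ : ℝ) := Nat.le_ceil _
      have h2 : -|g x| ≤ g x := neg_abs_le (g x)
      push_cast at hn ⊢
      linarith
    · intro hx C
      obtain ⟨n, hn⟩ := hx (C + ⌈|g x|⌉₊)
      match n with
      | 0 =>
        rw [BSsum_zero] at hn
        exfalso
        have : (0:ℝ) ≤ ((C + ⌈|g x|⌉₊ : ℕ) : ℝ) := Nat.cast_nonneg _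
        linarith
      | (n+1) =>
        refine ⟨n, ?_⟩
        rw [BSsum_succ] at hn
        have h1 : |g x| ≤ (⌈|g x|⌉₊ : ℝ) := Nat.le_ceil _
        have h2 : g x ≤ |g x| := le_abs_self (g x)
        push_cast at hn ⊢
        linarith
  rcases hT.ae_empty_or_univ hBmeas hBinv with h | h
  · have hB0 : μ B = 0 := ae_eq_empty.mp h
    filter_upwards [measure_eq_zero_iff_ae_notMem.mp hB0] with x hx
    simp only [hB, Set.mem_setOf_eq, not_forall, not_exists, not_lt] at hx
    exact hx
  · exfalso
    set E : ℕ → Set Ω := fun N => {x | 0 < PhiMax T g N x} with hEdef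
    have hEmeas : ∀ N, MeasurableSet (E N) := fun N =>
      measurableSet_lt measurable_const (PhiMax_measurable hTm hgm N)
    have hEmono : Monotone E := fun N M hNM x hx =>
      lt_of_lt_of_le hx (PhiMax_mono T g x hNM)
    have hsub : B ⊆ ⋃ N, E N := by
      intro x hx
      obtain ⟨n, hn⟩ := hx 0
      refine Set.mem_iUnion.mpr ⟨n, ?_⟩
      have : (0:ℝ) < BSsum T g n x := by simpa using hn
      exact lt_of_lt_of_le this (BSsum_le_PhiMax T g x le_rfl)
    have hlim := tendsto_setIntegral_of_monotone hEmeas hEmono hgi.integrableOn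
    have hge : 0 ≤ ∫ x in ⋃ N, E N, g x ∂μ :=
      ge_of_tendsto' hlim fun N => maximal_erg hT.toMeasurePreserving hemb hgm hgi N
    have hU0 : μ (⋃ N, E N)ᶜ = 0 :=
      measure_mono_null (Set.compl_subset_compl.mpr hsub) (ae_eq_univ.mp h)
    have hcompl : ∫ x in (⋃ N, E N)ᶜ, g x ∂μ = 0 := by
      rw [Measure.restrict_eq_zero.mpr hU0, integral_zero_measure]
    have := integral_add_compl (MeasurableSet.iUnion hEmeas) hgi
    linarith

lemma birkhoff_upper_s12 {T : Ω → Ω} (hT : Ergodic T μ) (hemb : MeasurableEmbedding T)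
    {f : Ω → ℝ} (hfm : Measurable f) (hfi : Integrable f μ) {c : ℝ} (hc : ∫ x, f x ∂μ < c) :
    ∀ᵐ x ∂μ, ∃ C : ℕ, ∀ n : ℕ, BSsum T f n x ≤ n * c + C := by
  have hgi : Integrable (fun x => f x - c) μ := hfi.sub (integrable_const c)
  have hneg : ∫ x, (f x - c) ∂μ < 0 := by
    rw [integral_sub hfi (integrable_const c), integral_const]
    simp only [probReal_univ, one_smul]
    linarith
  filter_upwards [ae_bdd_of_integral_neg hT hemb (hfm.sub measurable_const) hgi hneg]
    with x hx
  obtain ⟨C, hC⟩ := hx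
  refine ⟨C, fun n => ?_⟩
  have := hC n
  change BSsum T (fun y => f y - c) n x ≤ C at this
  rw [BSsum_sub_const] at this
  linarith

/-- Birkhoff's pointwise ergodic theorem. -/
lemma birkhoff_erg {T : Ω → Ω} (hT : Ergodic T μ) (hemb : MeasurableEmbedding T)
    {f : Ω → ℝ} (hfm : Measurable f) (hfi : Integrable f μ) :
    ∀ᵐ x ∂μ, Tendsto (fun n : ℕ => BSsum T f n x / n) atTop (𝓝 (∫ x, f x ∂μ)) := by
  set I := ∫ x, f x ∂μ with hI
  have hupper : ∀ k : ℕ, ∀ᵐ x ∂μ, ∃ C : ℕ, ∀ n : ℕ, BSsum T f n x ≤ n * (I + 1/(k+1)) + C := by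
    intro k
    refine birkhoff_upper_s12 hT hemb hfm hfi ?_
    have : (0:ℝ) < 1/((k:ℝ)+1) := by positivity
    linarith
  have hlower : ∀ k : ℕ, ∀ᵐ x ∂μ, ∃ C : ℕ, ∀ n : ℕ,
      -(BSsum T f n x) ≤ n * (-I + 1/(k+1)) + C := by
    intro k
    have hInt : ∫ x, -f x ∂μ = -I := by rw [← integral_neg]
    have hneg : ∫ x, -f x ∂μ < -I + 1/(k+1) := by
      rw [hInt]
      have : (0:ℝ) < 1/((k:ℝ)+1) := by positivity
      linarith
    filter_upwards [birkhoff_upper_s12 hT hemb hfm.neg hfi.neg hneg] with x hx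
    obtain ⟨C, hC⟩ := hx
    exact ⟨C, fun n => by have := hC n; change BSsum T (fun y => -f y) n x ≤ _ at this; rw [BSsum_neg] at this; linarith⟩
  filter_upwards [ae_all_iff.mpr hupper, ae_all_iff.mpr hlower] with x hu hl
  rw [Metric.tendsto_atTop]
  intro ε hε
  obtain ⟨k, hk⟩ := exists_nat_one_div_lt (half_pos hε)
  obtain ⟨C₁, hC₁⟩ := hu k
  obtain ⟨C₂, hC₂⟩ := hl k
  set C : ℕ := max C₁ C₂ with hCdef
  refine ⟨⌈(C:ℝ)/(ε/2)⌉₊ + 1, fun n hn => ?_⟩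
  have hn1 : 1 ≤ n := le_trans (Nat.le_add_left 1 _) hn
  have hn0 : (0:ℝ) < n := by exact_mod_cast hn1
  have hCn' : (C:ℝ) < ε/2 * n := by
    have h1 : (C:ℝ)/(ε/2) < n := by
      calc (C:ℝ)/(ε/2) ≤ ⌈(C:ℝ)/(ε/2)⌉₊ := Nat.le_ceil _
      _ < n := by exact_mod_cast Nat.lt_of_succ_le hn
    calc (C:ℝ) = (C:ℝ)/(ε/2) * (ε/2) := by field_simp
    _ < n * (ε/2) := by
        apply mul_lt_mul_of_pos_right h1 (half_pos hε)
    _ = ε/2 * n := by ring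
  have h1 := hC₁ n
  have h2 := hC₂ n
  have hC1C : (C₁:ℝ) ≤ C := by exact_mod_cast le_max_left _ _
  have hC2C : (C₂:ℝ) ≤ C := by exact_mod_cast le_max_right _ _
  have hmul : (n:ℝ) * (1/(k+1)) < n * (ε/2) := by
    exact mul_lt_mul_of_pos_left hk hn0
  have hgoal1 : BSsum T f n x < (I + ε) * n := by nlinarith
  have hgoal2 : (I - ε) * n < BSsum T f n x := by nlinarith
  rw [Real.dist_eq, abs_sub_lt_iff]
  constructor
  · rw [sub_lt_iff_lt_add, div_lt_iff₀ hn0]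
    nlinarith
  · have : (I - ε) < BSsum T f n x / n := by
      rw [lt_div_iff₀ hn0]
      nlinarith
    linarith

lemma sum_Icc_one {M : Type*} [AddCommMonoid M] (φ : ℕ → M) (n : ℕ) :
    ∑ j ∈ Finset.Icc 1 n, φ j = ∑ i ∈ Finset.range n, φ (i + 1) := by
  induction n with
  | zero => simp
  | succ n IH => rw [Finset.sum_Icc_succ_top (by omega), IH, Finset.sum_range_succ]

lemma Icc_sum_eq (T : Ω → Ω) (φ : Ω → ℝ) (x : Ω) (n : ℕ) :
    ∑ j ∈ Finset.Icc 1 n, φ (T^[j] x) = BSsum T φ n (T x) := by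
  rw [sum_Icc_one (fun j => φ (T^[j] x)) n, BSsum_def]
  refine Finset.sum_congr rfl fun i _ => ?_
  rw [Function.iterate_succ_apply]

/-- Birkhoff averages along `T x` (i.e. sums over `j ∈ [1, n]`). -/
lemma birkhoff_shift {T : Ω → Ω} (hT : Ergodic T μ) (hemb : MeasurableEmbedding T)
    {φ : Ω → ℝ} (hm : Measurable φ) (hi : Integrable φ μ) :
    ∀ᵐ x ∂μ, Tendsto (fun n : ℕ => (∑ j ∈ Finset.Icc 1 n, φ (T^[j] x)) / n)
      atTop (𝓝 (∫ y, φ y ∂μ)) := by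
  have h := birkhoff_erg hT hemb hm hi
  have h2 := hT.toMeasurePreserving.quasiMeasurePreserving.ae h
  filter_upwards [h2] with x hx
  have : (fun n : ℕ => (∑ j ∈ Finset.Icc 1 n, φ (T^[j] x)) / n)
      = fun n : ℕ => BSsum T φ n (T x) / n := by
    funext n; rw [Icc_sum_eq]
  rw [this]
  exact hx

/-- The triangular ergodic lemma. -/
lemma triangular_erg {T : Ω → Ω} (hT : Ergodic T μ) (hemb : MeasurableEmbedding T)
    (h : ℕ → Ω → ℝ) (hm : ∀ n, Measurable (h n))
    (hlim : Ω → ℝ) (hlimm : Measurable hlim)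
    (H : Ω → ℝ) (Hm : Measurable H) (Hnn : ∀ x, 0 ≤ H x) (Hi : Integrable H μ)
    (hb : ∀ᵐ x ∂μ, (∀ n, |h (n+1) x| ≤ H x) ∧ |hlim x| ≤ H x)
    (hc : ∀ᵐ x ∂μ, Tendsto (fun n => h n x) atTop (𝓝 (hlim x))) :
    ∀ᵐ x ∂μ, Tendsto (fun n : ℕ => (∑ j ∈ Finset.Icc 1 n, h (n - j + 1) (T^[j] x)) / n)
      atTop (𝓝 (∫ x, hlim x ∂μ)) := by
  classical
  have hTm : Measurable T := hT.toMeasurePreserving.measurable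
  set d : ℕ → Ω → ℝ := fun n x => min |h n x - hlim x| (2 * H x) with hd
  set r : ℕ → Ω → ℝ := fun k x => ⨆ i : ℕ, d (k + 1 + i) x with hr
  have hdm : ∀ n, Measurable (d n) := fun n => ((hm n).sub hlimm).abs.min (Hm.const_mul 2)
  have hd_nonneg : ∀ n x, 0 ≤ d n x := fun n x => le_min (abs_nonneg _) (by linarith [Hnn x])
  have hd_le : ∀ n x, d n x ≤ 2 * H x := fun n x => min_le_right _ _
  have hrm : ∀ k, Measurable (r k) := fun k => Measurable.iSup (fun i => hdm _)
  have hbdd : ∀ k x, BddAbove (Set.range fun i => d (k + 1 + i) x) := fun k x =>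
    ⟨2 * H x, by rintro y ⟨i, rfl⟩; exact hd_le _ _⟩
  have hr_le : ∀ k x, r k x ≤ 2 * H x := fun k x => ciSup_le fun i => hd_le _ _
  have hr_nonneg : ∀ k x, 0 ≤ r k x := fun k x =>
    (hd_nonneg (k+1+0) x).trans (le_ciSup (hbdd k x) 0)
  have hd_le_r : ∀ k n x, k + 1 ≤ n → d n x ≤ r k x := by
    intro k n x hkn
    have heq : d n x = d (k + 1 + (n - (k+1))) x := by congr 1; omega
    rw [heq]
    exact le_ciSup (hbdd k x) _
  have hri : ∀ k, Integrable (r k) μ := fun k =>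
    (Hi.const_mul 2).mono' (hrm k).aestronglyMeasurable (ae_of_all _ fun x => by
      rw [Real.norm_eq_abs, abs_of_nonneg (hr_nonneg k x)]; exact hr_le k x)
  have hlimi : Integrable hlim μ :=
    Hi.mono' hlimm.aestronglyMeasurable (hb.mono fun x hx => by
      rw [Real.norm_eq_abs]; exact hx.2)
  -- r k → 0 pointwise a.e.
  have hrconv : ∀ᵐ x ∂μ, Tendsto (fun k => r k x) atTop (𝓝 0) := by
    filter_upwards [hc] with x hx
    rw [Metric.tendsto_atTop]
    intro ε hε
    obtain ⟨K, hK⟩ := Metric.tendsto_atTop.mp hx (ε/2) (half_pos hε)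
    refine ⟨K, fun k hk => ?_⟩
    have hrle : r k x ≤ ε/2 := by
      refine ciSup_le fun i => ?_
      refine (min_le_left _ _).trans ?_
      have := hK (k + 1 + i) (by omega)
      rw [Real.dist_eq] at this
      linarith
    rw [Real.dist_eq, sub_zero, abs_of_nonneg (hr_nonneg k x)]
    linarith
  -- ∫ r k → 0
  have hIr : Tendsto (fun k => ∫ x, r k x ∂μ) atTop (𝓝 0) := by
    have h0 : Tendsto (fun k => ∫ x, r k x ∂μ) atTop (𝓝 (∫ _x, (0:ℝ) ∂μ)) := by
      refine tendsto_integral_of_dominated_convergence (fun x => 2 * H x)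
        (fun k => (hrm k).aestronglyMeasurable) (Hi.const_mul 2)
        (fun k => ae_of_all _ fun x => ?_) hrconv
      rw [Real.norm_eq_abs, abs_of_nonneg (hr_nonneg k x)]
      exact hr_le k x
    simpa using h0
  -- good points
  have hgood : ∀ᵐ x ∂μ, ∀ j : ℕ,
      (∀ n, |h (n+1) (T^[j] x)| ≤ H (T^[j] x)) ∧ |hlim (T^[j] x)| ≤ H (T^[j] x) := by
    rw [ae_all_iff]
    intro j
    exact (hT.toMeasurePreserving.iterate j).quasiMeasurePreserving.ae hb
  filter_upwards [hgood, birkhoff_shift hT hemb hlimm hlimi,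
    ae_all_iff.mpr (fun k => birkhoff_shift hT hemb (hrm k) (hri k)),
    birkhoff_shift hT hemb Hm Hi] with x hx hbirk hrbirk hHbirk
  set A : ℕ → ℝ := fun n => (∑ j ∈ Finset.Icc 1 n, hlim (T^[j] x)) / n with hA
  set D : ℕ → ℝ := fun n =>
    (∑ j ∈ Finset.Icc 1 n, (h (n - j + 1) (T^[j] x) - hlim (T^[j] x))) / n with hD
  have hsplit : (fun n : ℕ => (∑ j ∈ Finset.Icc 1 n, h (n - j + 1) (T^[j] x)) / n)
      = fun n => A n + D n := by
    funext n
    simp only [hA, hD, Finset.sum_sub_distrib]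
    ring
  rw [hsplit]
  -- bound |D n| by b k n
  set b : ℕ → ℕ → ℝ := fun k n =>
    (∑ j ∈ Finset.Icc 1 n, r k (T^[j] x)) / n
      + 2 * ((∑ j ∈ Finset.Icc 1 n, H (T^[j] x)) / n
        - (∑ j ∈ Finset.Icc 1 (n - k), H (T^[j] x)) / n) with hbdef
  have hDb : ∀ k n, 1 ≤ n → |D n| ≤ b k n := by
    intro k n hn1
    have hn0 : (0:ℝ) < n := by exact_mod_cast hn1
    have habs : |D n| = |∑ j ∈ Finset.Icc 1 n, (h (n - j + 1) (T^[j] x) - hlim (T^[j] x))| / n := by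
      rw [hD, abs_div, abs_of_pos hn0]
    have step1 : |∑ j ∈ Finset.Icc 1 n, (h (n - j + 1) (T^[j] x) - hlim (T^[j] x))|
        ≤ ∑ j ∈ Finset.Icc 1 n, d (n - j + 1) (T^[j] x) := by
      refine (Finset.abs_sum_le_sum_abs _ _).trans (Finset.sum_le_sum fun j hj => ?_)
      have h2H : |h (n - j + 1) (T^[j] x) - hlim (T^[j] x)| ≤ 2 * H (T^[j] x) := by
        have hb1 := (hx j).1 (n - j)
        have hb2 := (hx j).2
        calc |h (n - j + 1) (T^[j] x) - hlim (T^[j] x)|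
            ≤ |h (n - j + 1) (T^[j] x)| + |hlim (T^[j] x)| := abs_sub _ _
        _ ≤ 2 * H (T^[j] x) := by linarith
      exact le_min le_rfl h2H
    have hsubI : Finset.Icc 1 (n - k) ⊆ Finset.Icc 1 n :=
      Finset.Icc_subset_Icc_right (Nat.sub_le n k)
    have step2 : ∑ j ∈ Finset.Icc 1 n, d (n - j + 1) (T^[j] x)
        ≤ (∑ j ∈ Finset.Icc 1 n, r k (T^[j] x))
          + ((∑ j ∈ Finset.Icc 1 n, 2 * H (T^[j] x))
            - ∑ j ∈ Finset.Icc 1 (n - k), 2 * H (T^[j] x)) := by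
      have e1 : ∑ j ∈ Finset.Icc 1 n, d (n - j + 1) (T^[j] x)
          = (∑ j ∈ Finset.Icc 1 n \ Finset.Icc 1 (n - k), d (n - j + 1) (T^[j] x))
            + ∑ j ∈ Finset.Icc 1 (n - k), d (n - j + 1) (T^[j] x) :=
        (Finset.sum_sdiff hsubI).symm
      have e2 : ∑ j ∈ Finset.Icc 1 n \ Finset.Icc 1 (n - k), d (n - j + 1) (T^[j] x)
          ≤ ∑ j ∈ Finset.Icc 1 n \ Finset.Icc 1 (n - k), 2 * H (T^[j] x) :=
        Finset.sum_le_sum fun j _ => hd_le _ _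
      have e3 : ∑ j ∈ Finset.Icc 1 n \ Finset.Icc 1 (n - k), 2 * H (T^[j] x)
          = (∑ j ∈ Finset.Icc 1 n, 2 * H (T^[j] x))
            - ∑ j ∈ Finset.Icc 1 (n - k), 2 * H (T^[j] x) := by
        rw [eq_sub_iff_add_eq]
        exact Finset.sum_sdiff hsubI
      have e4 : ∑ j ∈ Finset.Icc 1 (n - k), d (n - j + 1) (T^[j] x)
          ≤ ∑ j ∈ Finset.Icc 1 (n - k), r k (T^[j] x) := by
        refine Finset.sum_le_sum fun j hj => ?_
        rw [Finset.mem_Icc] at hj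
        exact hd_le_r k _ _ (by omega)
      have e5 : ∑ j ∈ Finset.Icc 1 (n - k), r k (T^[j] x)
          ≤ ∑ j ∈ Finset.Icc 1 n, r k (T^[j] x) :=
        Finset.sum_le_sum_of_subset_of_nonneg hsubI fun j _ _ => hr_nonneg k _
      linarith
    rw [habs, hbdef]
    rw [div_le_iff₀ hn0]
    have hb' : b k n * n = (∑ j ∈ Finset.Icc 1 n, r k (T^[j] x))
        + ((∑ j ∈ Finset.Icc 1 n, 2 * H (T^[j] x))
          - ∑ j ∈ Finset.Icc 1 (n - k), 2 * H (T^[j] x)) := by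
      rw [hbdef]
      have : ∀ s : Finset ℕ, ∑ j ∈ s, 2 * H (T^[j] x) = 2 * ∑ j ∈ s, H (T^[j] x) := by
        intro s; rw [Finset.mul_sum]
      rw [this, this]
      field_simp
    rw [hb']
    exact step1.trans step2
  -- limits of the bounds
  have hblim : ∀ k, Tendsto (fun n => b k n) atTop (𝓝 (∫ y, r k y ∂μ)) := by
    intro k
    have t1 := hrbirk k
    have t2 := hHbirk
    have t3 : Tendsto (fun n : ℕ => (∑ j ∈ Finset.Icc 1 (n - k), H (T^[j] x)) / n)
        atTop (𝓝 (∫ y, H y ∂μ)) := by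
      have comp : Tendsto (fun n : ℕ => (∑ j ∈ Finset.Icc 1 (n - k), H (T^[j] x)) / (n - k : ℕ))
          atTop (𝓝 (∫ y, H y ∂μ)) := t2.comp (tendsto_sub_atTop_nat k)
      have ratio : Tendsto (fun n : ℕ => ((n - k : ℕ) : ℝ) / n) atTop (𝓝 1) := by
        have base : Tendsto (fun n : ℕ => 1 - (k:ℝ)/n) atTop (𝓝 1) := by
          have := tendsto_const_div_atTop_nhds_zero_nat (k:ℝ)
          simpa using tendsto_const_nhds.sub this
        refine base.congr' ?_
        filter_upwards [eventually_ge_atTop (k+1)] with n hn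
        have hn0 : (n:ℝ) ≠ 0 := by
          exact_mod_cast (by omega : (n:ℕ) ≠ 0)
        rw [Nat.cast_sub (by omega)]
        field_simp
      have prod := comp.mul ratio
      rw [mul_one] at prod
      refine prod.congr' ?_
      filter_upwards [eventually_ge_atTop (k+1)] with n hn
      have hnk0 : ((n - k : ℕ) : ℝ) ≠ 0 := by
        exact_mod_cast (by omega : (n - k : ℕ) ≠ 0)
      have hn0 : (n:ℝ) ≠ 0 := by
        exact_mod_cast (by omega : (n:ℕ) ≠ 0)
      show (∑ j ∈ Finset.Icc 1 (n - k), H (T^[j] x)) / ((n - k : ℕ) : ℝ) * (((n - k : ℕ) : ℝ) / n)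
          = (∑ j ∈ Finset.Icc 1 (n - k), H (T^[j] x)) / n
      field_simp
    have := t1.add (((t2.sub t3)).const_mul 2)
    rw [sub_self, mul_zero, add_zero] at this
    exact this
  -- squeeze
  have hDzero : Tendsto D atTop (𝓝 0) := by
    rw [Metric.tendsto_atTop]
    intro ε hε
    obtain ⟨k, hk⟩ := (hIr.eventually_lt_const (half_pos hε)).exists
    have hev : ∀ᶠ n in atTop, b k n < ε :=
      (hblim k).eventually_lt_const (by linarith)
    obtain ⟨N, hN⟩ := eventually_atTop.mp hev
    refine ⟨max N 1, fun n hn => ?_⟩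
    have hn1 : 1 ≤ n := le_trans (le_max_right N 1) hn
    have hnN : N ≤ n := le_trans (le_max_left N 1) hn
    rw [Real.dist_eq, sub_zero]
    exact lt_of_le_of_lt (hDb k n hn1) (hN n hnN)
  have := hbirk.add hDzero
  rw [add_zero] at this
  exact this

end CoboundaryAux

/-- Under Hannan's condition, with `gₙ = P₀(U⁻¹Sₙ(f)) → m` a.e. and `sup_n |gₙ|`
square-integrable, one has `(1/n) ∑_{j=1}^n (Uʲ g_{n-j+1})² → ‖m‖₂²` a.e. -/
theorem coboundary_paper_stmt12
    {Ω : Type*} {mΩ : MeasurableSpace Ω} (μ : Measure Ω) [IsProbabilityMeasure μ]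
    (T : Ω ≃ᵐ Ω) (hT : Ergodic T μ)
    (ℱ : ℤ → MeasurableSpace Ω) (hle : ∀ i, ℱ i ≤ mΩ) (hmono : Monotone ℱ)
    (hshift : ∀ i, ℱ (i + 1) = (ℱ i).comap T)
    (f : Ω → ℝ) (hf2 : MemLp f 2 μ) (hf0 : ∫ ω, f ω ∂μ = 0)
    (hfmeas : StronglyMeasurable[ℱ 0] f)
    (htail : μ[f | ⨅ i : ℤ, ℱ i] =ᵐ[μ] 0)
    (hannan : ∑' k : ℕ,
      eLpNorm ((μ[f | ℱ (-(k : ℤ))]) - (μ[f | ℱ (-(k : ℤ) - 1)])) 2 μ ≠ ⊤)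
    -- `gk n = P₀ (U⁻¹ Sₙ(f))`
    (gk : ℕ → Ω → ℝ)
    (hgk : ∀ n, gk n =
      (μ[(fun ω => ∑ j ∈ Finset.range n, f ((⇑T)^[j] ω)) | ℱ 0]) -
        (μ[(fun ω => ∑ j ∈ Finset.range n, f ((⇑T)^[j] ω)) | ℱ (-1)]))
    (m : Ω → ℝ)
    (hconv : ∀ᵐ ω ∂μ, Tendsto (fun n => gk n ω) atTop (nhds (m ω)))
    (hsup : MemLp (fun ω => ⨆ n : ℕ, |gk (n + 1) ω|) 2 μ) :
    ∀ᵐ ω ∂μ, Tendsto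
      (fun n : ℕ =>
        (∑ j ∈ Finset.Icc 1 n, (gk (n - j + 1) ((⇑T)^[j] ω)) ^ 2) / n)
      atTop (nhds (∫ ω, (m ω) ^ 2 ∂μ)) := by
  have hemb : MeasurableEmbedding (⇑T) := T.measurableEmbedding
  have hgkm : ∀ n, Measurable (gk n) := by
    intro n
    rw [hgk n]
    exact ((stronglyMeasurable_condExp.mono (hle 0)).measurable).sub
      ((stronglyMeasurable_condExp.mono (hle (-1))).measurable)
  have hmae : AEMeasurable m μ :=
    aemeasurable_of_tendsto_metrizable_ae atTop (fun n => (hgkm n).aemeasurable) hconv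
  set m' := hmae.mk m with hm'def
  have hm'm : Measurable m' := hmae.measurable_mk
  have hmm' : m =ᵐ[μ] m' := hmae.ae_eq_mk
  set G : Ω → ℝ := fun ω => ⨆ n : ℕ, |gk (n + 1) ω| with hGdef
  have hG2 : MemLp G 2 μ := hsup
  set G' := hG2.1.mk G with hG'def
  have hG'sm : StronglyMeasurable G' := hG2.1.stronglyMeasurable_mk
  have hGG' : G =ᵐ[μ] G' := hG2.1.ae_eq_mk
  have hG'2 : MemLp G' 2 μ := hG2.ae_eq hGG'
  set H : Ω → ℝ := fun ω => (G' ω)^2 with hHdef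
  have hHm : Measurable H := (hG'sm.measurable).pow_const 2
  have hHnn : ∀ x, 0 ≤ H x := fun x => sq_nonneg _
  have hHi : Integrable H μ := hG'2.integrable_sq
  have hb : ∀ᵐ x ∂μ, (∀ n, |(gk (n+1) x)^2| ≤ H x) ∧ |(m' x)^2| ≤ H x := by
    filter_upwards [hconv, hGG', hmm'] with x hx hGx hmx
    have habs : Tendsto (fun n : ℕ => |gk (n + 1) x|) atTop (𝓝 |m x|) :=
      ((hx.comp (tendsto_add_atTop_nat 1))).abs
    have hbdd : BddAbove (Set.range fun n : ℕ => |gk (n + 1) x|) :=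
      habs.bddAbove_range
    have hle1 : ∀ n, |gk (n+1) x| ≤ G' x := fun n => by
      rw [← hGx]; exact le_ciSup hbdd n
    have hlem : |m x| ≤ G' x := le_of_tendsto habs (Eventually.of_forall hle1)
    refine ⟨fun n => ?_, ?_⟩
    · rw [abs_of_nonneg (sq_nonneg _), ← sq_abs]
      exact pow_le_pow_left₀ (abs_nonneg _) (hle1 n) 2
    · rw [abs_of_nonneg (sq_nonneg _), ← hmx, ← sq_abs]
      exact pow_le_pow_left₀ (abs_nonneg _) hlem 2
  have hc : ∀ᵐ x ∂μ, Tendsto (fun n => (gk n x)^2) atTop (𝓝 ((m' x)^2)) := by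
    filter_upwards [hconv, hmm'] with x hx hmx
    rw [← hmx]
    exact hx.pow 2
  have main := triangular_erg hT hemb (fun n x => (gk n x)^2)
    (fun n => (hgkm n).pow_const 2) (fun x => (m' x)^2) (hm'm.pow_const 2)
    H hHm hHnn hHi hb hc
  have hint : ∫ x, (m' x)^2 ∂μ = ∫ ω, (m ω)^2 ∂μ :=
    integral_congr_ae (hmm'.symm.mono fun x hx => by simp only [hx])
  rw [hint] at main
  exact main
end

section
/- Let ℓₖ = 2ᵏ and suppose ‖Sₙ(f)‖₂² ≤ 4 Σ_{k: 2ᵏ ≤ n} 2ᵏ/k + 4 Σ_{k: 2ᵏ > n} n²/(k 2ᵏ) for all n. Then ‖Sₙ(f)‖₂² = o(n) as n → ∞. -/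
open Filter Asymptotics

private lemma cb19_filter_eq (n : ℕ) (hn : 2 ≤ n) :
    (Finset.Icc 1 n).filter (fun k => 2 ^ k ≤ n) = Finset.Icc 1 (Nat.log 2 n) := by
  ext k
  simp only [Finset.mem_filter, Finset.mem_Icc]
  constructor
  · rintro ⟨⟨h1, _⟩, h2⟩
    exact ⟨h1, (Nat.le_log_iff_pow_le (by norm_num) (by omega)).mpr h2⟩
  · rintro ⟨h1, h2⟩
    have h3 : 2 ^ k ≤ n := (Nat.le_log_iff_pow_le (by norm_num) (by omega)).mp h2
    exact ⟨⟨h1, le_trans (Nat.lt_two_pow_self (n := k)).le h3⟩, h3⟩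

private lemma cb19_sqrt_littleo :
    (fun n : ℕ => Real.sqrt n) =o[atTop] fun n : ℕ => (n : ℝ) := by
  rw [isLittleO_iff]
  intro ε hε
  filter_upwards [eventually_ge_atTop (⌈(1/ε)^2⌉₊ + 1)] with n hn
  have hn0 : (0:ℝ) ≤ n := Nat.cast_nonneg n
  have hceil : ((1:ℝ)/ε)^2 ≤ n := by
    calc ((1:ℝ)/ε)^2 ≤ (⌈(1/ε)^2⌉₊ : ℝ) := Nat.le_ceil _
      _ ≤ n := by exact_mod_cast (by omega : ⌈(1/ε)^2⌉₊ ≤ n)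
  have hsq : 1/ε ≤ Real.sqrt n := by
    rw [show (1:ℝ)/ε = Real.sqrt ((1/ε)^2) from (Real.sqrt_sq (by positivity)).symm]
    exact Real.sqrt_le_sqrt hceil
  have hs0 : 0 ≤ Real.sqrt n := Real.sqrt_nonneg _
  rw [Real.norm_of_nonneg hs0, Real.norm_of_nonneg hn0]
  calc Real.sqrt n = ε * (1/ε) * Real.sqrt n := by field_simp
    _ ≤ ε * Real.sqrt n * Real.sqrt n := by
        rw [mul_assoc, mul_assoc]
        exact mul_le_mul_of_nonneg_left (mul_le_mul_of_nonneg_right hsq hs0) hε.le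
    _ = ε * n := by rw [mul_assoc, Real.mul_self_sqrt hn0]

private lemma cb19_log_littleo :
    (fun n : ℕ => (n : ℝ) / (Nat.log 2 n)) =o[atTop] fun n : ℕ => (n : ℝ) := by
  rw [isLittleO_iff]
  intro ε hε
  filter_upwards [eventually_ge_atTop (2 ^ (⌈1/ε⌉₊ + 1))] with n hn
  have hn1 : 1 ≤ n := le_trans Nat.one_le_two_pow hn
  have hlog : ⌈1/ε⌉₊ + 1 ≤ Nat.log 2 n :=
    (Nat.le_log_iff_pow_le (by norm_num) (by omega)).mpr hn
  have hK : (1:ℝ)/ε ≤ (Nat.log 2 n : ℝ) := by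
    calc (1:ℝ)/ε ≤ (⌈1/ε⌉₊ : ℝ) := Nat.le_ceil _
      _ ≤ (Nat.log 2 n : ℝ) := by exact_mod_cast (by omega : ⌈1/ε⌉₊ ≤ Nat.log 2 n)
  have hlpos : (0:ℝ) < Nat.log 2 n := lt_of_lt_of_le (by positivity) hK
  have hn0 : (0:ℝ) ≤ n := Nat.cast_nonneg n
  have hdiv : (0:ℝ) ≤ (n:ℝ) / (Nat.log 2 n) := by positivity
  rw [Real.norm_of_nonneg hdiv, Real.norm_of_nonneg hn0]
  calc (n:ℝ) / (Nat.log 2 n) ≤ (n:ℝ) / (1/ε) :=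
        div_le_div_of_nonneg_left hn0 (by positivity) hK
    _ = ε * n := by field_simp

private lemma cb19_sum_bound (n : ℕ) (hn : 2 ≤ n) :
    (∑ k ∈ Finset.Icc 1 (Nat.log 2 n), ((2:ℝ) ^ k / k)) ≤
      2 * Real.sqrt n + 4 * ((n:ℝ) / (Nat.log 2 n)) := by
  set m := Nat.log 2 n with hm
  have hm1 : 1 ≤ m := Nat.log_pos (by norm_num) hn
  have hpow : (2:ℝ) ^ m ≤ n := by exact_mod_cast Nat.pow_log_le_self 2 (by omega)
  have hlt : (n:ℝ) < 2 ^ (m + 1) := by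
    exact_mod_cast Nat.lt_pow_succ_log_self (by norm_num) n
  set h := m / 2 with hh
  have hhm : h ≤ m := Nat.div_le_self _ _
  have hsplit : ∑ k ∈ Finset.Icc 1 m, ((2:ℝ) ^ k / k)
      = ∑ k ∈ Finset.Ioc 0 h, ((2:ℝ) ^ k / k) + ∑ k ∈ Finset.Ioc h m, ((2:ℝ) ^ k / k) := by
    rw [show Finset.Icc 1 m = Finset.Ioc 0 m from rfl,
      ← Finset.sum_Ioc_consecutive _ (Nat.zero_le h) hhm]
  rw [hsplit]
  have part1 : ∑ k ∈ Finset.Ioc 0 h, ((2:ℝ) ^ k / k) ≤ 2 * Real.sqrt n := by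
    have step1 : ∑ k ∈ Finset.Ioc 0 h, ((2:ℝ) ^ k / k) ≤ ∑ k ∈ Finset.Ioc 0 h, (2:ℝ) ^ k := by
      apply Finset.sum_le_sum
      intro k hk
      simp only [Finset.mem_Ioc] at hk
      have : (1:ℝ) ≤ k := by exact_mod_cast hk.1
      calc (2:ℝ) ^ k / k ≤ (2:ℝ)^k / 1 := by gcongr
        _ = 2 ^ k := by ring
    have step2 : ∑ k ∈ Finset.Ioc 0 h, (2:ℝ) ^ k ≤ ∑ k ∈ Finset.range (h+1), (2:ℝ) ^ k := by
      apply Finset.sum_le_sum_of_subset_of_nonneg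
      · intro k hk; simp only [Finset.mem_Ioc] at hk; simp; omega
      · intros; positivity
    have step3 : ∑ k ∈ Finset.range (h+1), (2:ℝ) ^ k = 2 ^ (h+1) - 1 := by
      rw [geom_sum_eq (by norm_num)]; norm_num
    have hsq : (2:ℝ) ^ h ≤ Real.sqrt n := by
      rw [show (2:ℝ)^h = Real.sqrt ((2^h)^2) by rw [Real.sqrt_sq (by positivity)]]
      apply Real.sqrt_le_sqrt
      calc ((2:ℝ)^h)^2 = 2 ^ (2*h) := by rw [← pow_mul]; ring_nf
        _ ≤ 2 ^ m := by apply pow_le_pow_right₀ (by norm_num); omega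
        _ ≤ n := hpow
    calc ∑ k ∈ Finset.Ioc 0 h, ((2:ℝ) ^ k / k) ≤ 2^(h+1) - 1 := by
          rw [← step3]; exact step1.trans step2
      _ ≤ 2 * 2^h := by rw [pow_succ]; ring_nf; linarith
      _ ≤ 2 * Real.sqrt n := by linarith
  have part2 : ∑ k ∈ Finset.Ioc h m, ((2:ℝ) ^ k / k) ≤ 4 * ((n:ℝ) / m) := by
    have hmR : (0:ℝ) < m := by exact_mod_cast hm1
    have step1 : ∀ k ∈ Finset.Ioc h m, ((2:ℝ) ^ k / k) ≤ (2 / m) * 2 ^ k := by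
      intro k hk
      simp only [Finset.mem_Ioc] at hk
      have hk0 : (0:ℝ) < k := by exact_mod_cast (by omega : 0 < k)
      have hmk : (m:ℝ) ≤ 2 * k := by exact_mod_cast (by omega : m ≤ 2 * k)
      rw [div_le_iff₀ hk0] at *
      calc (2:ℝ)^k = 2^k * 1 := by ring
        _ ≤ 2 / m * 2 ^ k * k := by
          rw [div_mul_eq_mul_div, div_mul_eq_mul_div, le_div_iff₀ hmR]
          calc (2:ℝ)^k * 1 * m = 2^k * m := by ring
            _ ≤ 2^k * (2*k) := by gcongr
            _ = 2 * 2^k * k := by ring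
    have step2 : ∑ k ∈ Finset.Ioc h m, ((2:ℝ) ^ k / k)
        ≤ ∑ k ∈ Finset.Ioc h m, (2 / (m:ℝ)) * 2 ^ k := Finset.sum_le_sum step1
    have step3 : ∑ k ∈ Finset.Ioc h m, (2 / (m:ℝ)) * 2 ^ k
        ≤ (2 / (m:ℝ)) * (2^(m+1) - 1) := by
      rw [← Finset.mul_sum]
      apply mul_le_mul_of_nonneg_left _ (by positivity)
      calc ∑ k ∈ Finset.Ioc h m, (2:ℝ) ^ k ≤ ∑ k ∈ Finset.range (m+1), (2:ℝ)^k := by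
            apply Finset.sum_le_sum_of_subset_of_nonneg
            · intro k hk; simp only [Finset.mem_Ioc] at hk; simp; omega
            · intros; positivity
        _ = 2^(m+1) - 1 := by rw [geom_sum_eq (by norm_num)]; norm_num
    have step4 : (2 / (m:ℝ)) * (2^(m+1) - 1) ≤ 4 * ((n:ℝ) / m) := by
      have h2 : (2:ℝ)^(m+1) ≤ 2 * n := by rw [pow_succ]; nlinarith
      rw [show (2 / (m:ℝ)) * (2^(m+1) - 1) = (2*((2:ℝ)^(m+1) - 1))/m by ring,
        show 4 * ((n:ℝ)/m) = (4*(n:ℝ))/m by ring]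
      apply (div_le_div_iff_of_pos_right hmR).mpr
      linarith
    linarith
  linarith

private lemma cb19_tsum_bound (n : ℕ) (hn : 2 ≤ n) :
    (∑' k : ℕ, (if n < 2 ^ (k + 1) then (n : ℝ) ^ 2 / ((k + 1) * 2 ^ (k + 1)) else 0))
      ≤ 2 * ((n:ℝ) / (Nat.log 2 n)) := by
  set m := Nat.log 2 n with hmdef
  have hm1 : 1 ≤ m := Nat.log_pos (by norm_num) hn
  have hmR : (0:ℝ) < m := by exact_mod_cast hm1
  have hpow : (2:ℝ) ^ m ≤ n := by exact_mod_cast Nat.pow_log_le_self 2 (by omega)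
  have hltN : n < 2 ^ (m + 1) := Nat.lt_pow_succ_log_self (by norm_num) n
  set f : ℕ → ℝ := fun k => if n < 2 ^ (k + 1) then (n : ℝ) ^ 2 / ((k + 1) * 2 ^ (k + 1)) else 0
    with hf
  have hf0 : ∀ k, 0 ≤ f k := by
    intro k; simp only [hf]; split <;> positivity
  have hfle : ∀ k, f k ≤ (n:ℝ)^2 * (1/2)^(k+1) := by
    intro k; simp only [hf]
    split
    · rw [div_le_iff₀ (by positivity)]
      have h1 : (1:ℝ) ≤ (k:ℝ)+1 := by have := Nat.cast_nonneg (α:=ℝ) k; linarith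
      have : (n:ℝ)^2 * (1/2)^(k+1) * ((k+1) * 2^(k+1))
          = (n:ℝ)^2 * ((k:ℝ)+1) * ((1/2)^(k+1) * 2^(k+1)) := by ring
      rw [this, ← mul_pow]
      norm_num
      nlinarith [sq_nonneg (n:ℝ)]
    · positivity
  have hsum : Summable f := by
    apply Summable.of_nonneg_of_le hf0 hfle
    apply Summable.mul_left
    exact (summable_geometric_of_lt_one (by norm_num) (by norm_num)).comp_injective
      (add_left_injective 1)
  have hshift := (Summable.sum_add_tsum_nat_add m hsum).symm
  have hzero : ∑ i ∈ Finset.range m, f i = 0 := by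
    apply Finset.sum_eq_zero
    intro i hi
    simp only [Finset.mem_range] at hi
    have hcond : ¬ n < 2 ^ (i+1) := by
      push_neg
      calc 2 ^ (i+1) ≤ 2 ^ m := Nat.pow_le_pow_right (by norm_num) (by omega)
        _ ≤ n := Nat.pow_log_le_self 2 (by omega)
    simp only [hf, if_neg hcond]
  set c : ℝ := (n:ℝ)^2 / ((m+1) * 2^(m+1)) with hc
  have htail : ∑' k : ℕ, f (k + m) ≤ ∑' k : ℕ, c * (1/2)^k := by
    apply Summable.tsum_le_tsum _ (hsum.comp_injective (add_left_injective m))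
      (Summable.mul_left _ (summable_geometric_of_lt_one (by norm_num) (by norm_num)))
    intro k
    show f (k + m) ≤ c * (1/2)^k
    simp only [hf]
    split
    · have e1 : (2:ℝ)^(k+m+1) = 2^(m+1) * 2^k := by rw [← pow_add]; ring_nf
      have e2 : c * ((1:ℝ)/2)^k = (n:ℝ)^2 / (((m:ℝ)+1) * 2^(m+1) * 2^k) := by
        rw [hc]; field_simp; rw [← mul_pow]; norm_num
      rw [e2]
      apply div_le_div_of_nonneg_left (by positivity) (by positivity)
      calc ((m:ℝ)+1) * 2^(m+1) * 2^k ≤ ((k:ℝ)+(m:ℝ)+1) * 2^(m+1) * 2^k := by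
            have := Nat.cast_nonneg (α:=ℝ) k; gcongr; linarith
        _ = (↑(k+m)+1) * 2^(k+m+1) := by push_cast [e1]; ring
    · positivity
  have hgeom : ∑' k : ℕ, c * ((1:ℝ)/2)^k = c * 2 := by
    rw [tsum_mul_left, tsum_geometric_of_lt_one (by norm_num) (by norm_num)]
    norm_num
  have hfinal : c * 2 ≤ 2 * ((n:ℝ) / m) := by
    rw [hc]
    have hnle : (n:ℝ) ≤ 2^(m+1) := by
      have : (n:ℝ) < 2^(m+1) := by exact_mod_cast hltN
      linarith
    rw [show (n:ℝ)^2 / (((m:ℝ)+1)*2^(m+1)) * 2 = ((n:ℝ)^2*2)/(((m:ℝ)+1)*2^(m+1)) by ring,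
      show 2*((n:ℝ)/m) = (2*(n:ℝ))/m by ring, div_le_div_iff₀ (by positivity) hmR]
    have hn0 : (0:ℝ) ≤ n := by positivity
    have h2p : (0:ℝ) ≤ 2^(m+1) := by positivity
    calc (n:ℝ)^2 * 2 * m = (n:ℝ) * n * 2 * m := by ring
      _ ≤ (n:ℝ) * 2^(m+1) * 2 * m := by gcongr
      _ = 2 * (n:ℝ) * ((m:ℝ) * 2^(m+1)) := by ring
      _ ≤ 2 * (n:ℝ) * (((m:ℝ)+1) * 2^(m+1)) := by nlinarith [mul_nonneg hn0 h2p]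
  have heq : (∑' k : ℕ, f k) = ∑' k : ℕ, f (k + m) := by
    rw [hshift, hzero, zero_add]
  calc (∑' k : ℕ, f k) = ∑' k : ℕ, f (k + m) := heq
    _ ≤ ∑' k : ℕ, c * (1/2)^k := htail
    _ = c * 2 := hgeom
    _ ≤ 2 * ((n:ℝ) / m) := hfinal

/-- If `‖Sₙ(f)‖₂²` (a nonnegative quantity `S n`) satisfies
`S n ≤ 4 ∑_{k ≥ 1, 2ᵏ ≤ n} 2ᵏ/k + 4 ∑_{k ≥ 1, 2ᵏ > n} n²/(k2ᵏ)` for all `n ≥ 1`,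
then `S n = o(n)` as `n → ∞`. -/
theorem coboundary_paper_stmt19
    (S : ℕ → ℝ) (hS0 : ∀ n, 0 ≤ S n)
    (hbound : ∀ n : ℕ, 1 ≤ n →
      S n ≤ 4 * (∑ k ∈ (Finset.Icc 1 n).filter (fun k => 2 ^ k ≤ n),
          ((2 : ℝ) ^ k / k)) +
        4 * ∑' k : ℕ, (if n < 2 ^ (k + 1) then
          (n : ℝ) ^ 2 / ((k + 1) * 2 ^ (k + 1)) else 0)) :
    (fun n : ℕ => S n) =o[atTop] (fun n : ℕ => (n : ℝ)) := by
  have key : ∀ n : ℕ, 2 ≤ n →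
      S n ≤ 8 * Real.sqrt n + 24 * ((n:ℝ) / (Nat.log 2 n)) := by
    intro n hn
    have hb := hbound n (by omega)
    rw [cb19_filter_eq n hn] at hb
    have hA := cb19_sum_bound n hn
    have hB := cb19_tsum_bound n hn
    linarith
  have hbig : (fun n : ℕ => S n) =O[atTop]
      (fun n : ℕ => 8 * Real.sqrt n + 24 * ((n:ℝ) / (Nat.log 2 n))) := by
    rw [isBigO_iff]
    refine ⟨1, ?_⟩
    filter_upwards [eventually_ge_atTop 2] with n hn
    rw [Real.norm_of_nonneg (hS0 n), one_mul]
    exact le_trans (key n hn) (le_abs_self _)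
  have hlit : (fun n : ℕ => 8 * Real.sqrt n + 24 * ((n:ℝ) / (Nat.log 2 n)))
      =o[atTop] (fun n : ℕ => (n : ℝ)) :=
    (cb19_sqrt_littleo.const_mul_left 8).add (cb19_log_littleo.const_mul_left 24)
  exact hbig.trans_isLittleO hlit
end
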